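/- arXiv:2212.13373 — 3 statements merged into one kernel-verified Lean document; each statement's English description precedes it below -/
import Mathlib

section
/- For any permutation w in S_n, the recording tableau of w equals the insertion tableau of w^{-1}: Q_RS(w) = P_RS(w^{-1}). -/
namespace GelfandRSK

/-- Schensted insertion of `x` into a single row: replace the first entry greater than `x`,
returning the new row and the bumped entry (if any). -/
def insertRow (r : List ℕ) (x : ℕ) : List ℕ × Option ℕ :=
  match r.findIdx? (fun y => decide (x < y)) with
  | none => (r ++ [x], none)
  | some i => (r.set i x, r[i]?)

/-- Schensted row insertion of `x` into a tableau (list of rows). -/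
def rsInsert : List (List ℕ) → ℕ → List (List ℕ)
  | [], x => [[x]]
  | r :: rest, x =>
    match insertRow r x with
    | (r', none) => r' :: rest
    | (r', some y) => r' :: rsInsert rest y

/-- The (0-indexed) row in which Schensted insertion of `x` adds a new box. -/
def rsBumpRow : List (List ℕ) → ℕ → ℕ
  | [], _ => 0
  | r :: rest, x =>
    match insertRow r x with
    | (_, none) => 0
    | (_, some y) => rsBumpRow rest y + 1

/-- The (0-indexed) column in which Schensted insertion of `x` adds a new box. -/
def rsBumpCol (T : List (List ℕ)) (x : ℕ) : ℕ := (T.getD (rsBumpRow T x) []).length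

/-- Add entry `k` at the end of (0-indexed) row `r`. -/
def addAtRow (T : List (List ℕ)) (r : ℕ) (k : ℕ) : List (List ℕ) :=
  if r < T.length then T.set r (T.getD r [] ++ [k]) else T ++ [[k]]

/-- Add entry `k` at the end of (0-indexed) column `c`. -/
def addAtCol (T : List (List ℕ)) (c : ℕ) (k : ℕ) : List (List ℕ) :=
  addAtRow T (T.findIdx (fun r => decide (r.length ≤ c))) k

/-- The Robinson--Schensted insertion tableau of a word. -/
def PRS (w : List ℕ) : List (List ℕ) := w.foldl rsInsert []

/-- The Robinson--Schensted pair (insertion tableau, recording tableau) of a word. -/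
def RSpair (w : List ℕ) : List (List ℕ) × List (List ℕ) :=
  (w.zipIdx.map Prod.swap).foldl (fun pq ix =>
    (rsInsert pq.1 ix.2, addAtRow pq.2 (rsBumpRow pq.1 ix.2) (ix.1 + 1))) ([], [])

/-- The Robinson--Schensted recording tableau of a word. -/
def QRS (w : List ℕ) : List (List ℕ) := (RSpair w).2

/-- The row reading word: read rows left to right, starting with the last row. -/
def rowWord (T : List (List ℕ)) : List ℕ := T.reverse.flatten

/-- The shape of a tableau: the list of its row lengths. -/
def shape (T : List (List ℕ)) : List ℕ := T.map List.length

/-- Columns of the tableau are strictly increasing downwards. -/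
def colStrict (T : List (List ℕ)) : Prop :=
  ∀ i c, i + 1 < T.length → c < (T.getD (i+1) []).length →
    (T.getD i []).getD c 0 < (T.getD (i+1) []).getD c 0

/-- A partially standard tableau: semistandard, of partition shape, with
distinct positive entries (hence rows and columns strictly increasing). -/
def PartiallyStandard (T : List (List ℕ)) : Prop :=
  (∀ r ∈ T, r ≠ []) ∧
  T.Chain' (fun r₁ r₂ => r₂.length ≤ r₁.length) ∧
  (∀ r ∈ T, r.Chain' (· < ·)) ∧
  colStrict T ∧
  T.flatten.Nodup ∧
  (∀ x ∈ T.flatten, 0 < x)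

/-- A standard tableau with `n` boxes: partially standard with entries exactly `1, …, n`. -/
def IsStandardTab (n : ℕ) (T : List (List ℕ)) : Prop :=
  PartiallyStandard T ∧ T.flatten.Perm (List.range' 1 n)

/-- Row Beissinger insertion of a pair `(a, b)` with `a ≤ b`. -/
def rBS (T : List (List ℕ)) (a b : ℕ) : List (List ℕ) :=
  if a = b then addAtRow T 0 a
  else addAtRow (rsInsert T a) (rsBumpRow T a + 1) b

/-- Column Beissinger insertion of a pair `(a, b)` with `a ≤ b`. -/
def cBS (T : List (List ℕ)) (a b : ℕ) : List (List ℕ) :=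
  if a = b then addAtCol T 0 a
  else addAtCol (rsInsert T a) (rsBumpCol T a + 1) b

/-- The function on 0-based indices underlying a permutation of `Fin n`
(identity outside `[0, n)`). -/
def permFn {n : ℕ} (z : Equiv.Perm (Fin n)) : ℕ → ℕ :=
  fun i => if h : i < n then (z ⟨i, h⟩ : ℕ) else i

/-- The one-line word (with 1-based values) of a function on `[0, m)`. -/
def wordFn (w : ℕ → ℕ) (m : ℕ) : List ℕ := (List.range m).map (fun i => w i + 1)

/-- The one-line word (with 1-based values) of a permutation in `S_n`. -/
def wordOf {n : ℕ} (z : Equiv.Perm (Fin n)) : List ℕ := wordFn (permFn z) n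

/-- The 1-based action of a permutation: `act y j = y(j)` in 1-based notation. -/
def act {n : ℕ} (y : Equiv.Perm (Fin n)) (j : ℕ) : ℕ := permFn y (j - 1) + 1

/-- The 1-based pairs `(a, b)` with `a ≤ b = z(a)` of an involution,
listed in increasing order of `b`. -/
def invPairsFn (w : ℕ → ℕ) (m : ℕ) : List (ℕ × ℕ) :=
  ((List.range m).filter (fun b => decide (w b ≤ b))).map (fun b => (w b + 1, b + 1))

/-- Row Beissinger correspondence applied to an involution given as a function on `[0, m)`. -/
def PrBSfn (w : ℕ → ℕ) (m : ℕ) : List (List ℕ) :=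
  (invPairsFn w m).foldl (fun T p => rBS T p.1 p.2) []

/-- Column Beissinger correspondence applied to an involution given as a function on `[0, m)`. -/
def PcBSfn (w : ℕ → ℕ) (m : ℕ) : List (List ℕ) :=
  (invPairsFn w m).foldl (fun T p => cBS T p.1 p.2) []

/-- The row Beissinger tableau of an involution in `S_n`. -/
def PrBS {n : ℕ} (z : Equiv.Perm (Fin n)) : List (List ℕ) := PrBSfn (permFn z) n

/-- The column Beissinger tableau of an involution in `S_n`. -/
def PcBS {n : ℕ} (z : Equiv.Perm (Fin n)) : List (List ℕ) := PcBSfn (permFn z) n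

/-- The transpose of a tableau. -/
def transposeT (T : List (List ℕ)) : List (List ℕ) :=
  (List.range (T.headD []).length).map (fun c => T.filterMap (fun r => r[c]?))

/-- The length of (0-indexed) column `c`. -/
def colLen (T : List (List ℕ)) (c : ℕ) : ℕ := (T.filter (fun r => decide (c < r.length))).length

/-- The number of columns of odd length. -/
def oddColCount (T : List (List ℕ)) : ℕ :=
  ((List.range (T.headD []).length).filter (fun c => decide (colLen T c % 2 = 1))).length

/-- The number of rows of odd length. -/
def oddRowCount (T : List (List ℕ)) : ℕ :=
  (T.filter (fun r => decide (r.length % 2 = 1))).length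

/-- Apply a function to every entry of a tableau. -/
def applyEntries (f : ℕ → ℕ) (T : List (List ℕ)) : List (List ℕ) := T.map (List.map f)

/-- The transposition of values `j` and `j+1`. -/
def swapVals (j : ℕ) : ℕ → ℕ := fun x => if x = j then j + 1 else if x = j + 1 then j else x

/-- The elementary dual equivalence operator `D_i` acting on a tableau
containing the entries `i-1`, `i`, `i+1`, defined via the row reading word. -/
def Dop (i : ℕ) (T : List (List ℕ)) : List (List ℕ) :=
  let w := rowWord T
  let p : ℕ → ℕ := fun v => w.idxOf v
  if (p i < p (i+1) ∧ p (i+1) < p (i-1)) ∨ (p (i-1) < p (i+1) ∧ p (i+1) < p i) then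
    applyEntries (swapVals (i-1)) T
  else if (p i < p (i-1) ∧ p (i-1) < p (i+1)) ∨ (p (i+1) < p (i-1) ∧ p (i-1) < p i) then
    applyEntries (swapVals i) T
  else T

/-- `x` lies strictly between `u` and `v`. -/
def Btwn {α : Type*} [LT α] (x u v : α) : Prop := (u < x ∧ x < v) ∨ (v < x ∧ x < u)

/-- Exchange the entries at 0-based positions `p` and `q` of a word. -/
def swapPos (u : List ℕ) (p q : ℕ) : List ℕ := (u.set p (u.getD q 0)).set q (u.getD p 0)

/-- The Knuth move relation at 1-based position `i` on words: either the word is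
unchanged and the letters at positions `i-1, i, i+1` are monotone, or the letters at
positions `i-1, i` are exchanged (when the letter at position `i+1` is between them),
or the letters at positions `i, i+1` are exchanged (when the letter at position `i-1`
is between them). -/
def KnuthRelW (i : ℕ) (u v : List ℕ) : Prop :=
  (v = u ∧ ((u.getD (i-2) 0 < u.getD (i-1) 0 ∧ u.getD (i-1) 0 < u.getD i 0) ∨
            (u.getD i 0 < u.getD (i-1) 0 ∧ u.getD (i-1) 0 < u.getD (i-2) 0))) ∨
  (Btwn (u.getD i 0) (u.getD (i-2) 0) (u.getD (i-1) 0) ∧ v = swapPos u (i-2) (i-1)) ∨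
  (Btwn (u.getD (i-2) 0) (u.getD (i-1) 0) (u.getD i 0) ∧ v = swapPos u (i-1) i)

/-- The Knuth move relation at position `i` on permutations. -/
def KnuthRel {n : ℕ} (i : ℕ) (v w : Equiv.Perm (Fin n)) : Prop :=
  KnuthRelW i (wordOf v) (wordOf w)

/-- The dual Knuth move relation at position `i` on permutations. -/
def DualKnuthRel {n : ℕ} (i : ℕ) (v w : Equiv.Perm (Fin n)) : Prop :=
  KnuthRelW i (wordOf v⁻¹) (wordOf w⁻¹)

/-- Knuth equivalence of permutations. -/
def KnuthEquiv {n : ℕ} (v w : Equiv.Perm (Fin n)) : Prop :=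
  Relation.ReflTransGen (fun a b => ∃ i, 1 < i ∧ i < n ∧ KnuthRel i a b) v w

/-- Dual Knuth equivalence of permutations. -/
def DualKnuthEquiv {n : ℕ} (v w : Equiv.Perm (Fin n)) : Prop :=
  Relation.ReflTransGen (fun a b => ∃ i, 1 < i ∧ i < n ∧ DualKnuthRel i a b) v w

/-- The 0-based fixed points of a permutation, in increasing order. -/
def fixList {n : ℕ} (z : Equiv.Perm (Fin n)) : List ℕ :=
  ((List.finRange n).filter (fun c => decide (z c = c))).map Fin.val

/-- The ascending embedding `ι_asc` of involutions of `[n]` into fixed-point-free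
involutions of `[2n]`, as a function on 0-based indices. -/
def iotaAsc {n : ℕ} (z : Equiv.Perm (Fin n)) : ℕ → ℕ := fun i =>
  let F := fixList z
  if h : i < n then
    if z ⟨i, h⟩ = ⟨i, h⟩ then n + F.idxOf i else (z ⟨i, h⟩ : ℕ)
  else if i < n + F.length then F.getD (i - n) 0
  else if i % 2 = 0 then i + 1 else i - 1

/-- The descending embedding `ι_des` of involutions of `[n]` into fixed-point-free
involutions of `[2n]`, as a function on 0-based indices. -/
def iotaDes {n : ℕ} (z : Equiv.Perm (Fin n)) : ℕ → ℕ := fun i =>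
  let F := fixList z
  if h : i < n then
    if z ⟨i, h⟩ = ⟨i, h⟩ then n + F.length - 1 - F.idxOf i else (z ⟨i, h⟩ : ℕ)
  else if i < n + F.length then F.getD (n + F.length - 1 - i) 0
  else if i % 2 = 0 then i + 1 else i - 1

/-- The number of inversions of a function on `[0, m)`. -/
def lenFn (w : ℕ → ℕ) (m : ℕ) : ℕ :=
  ((Finset.range m ×ˢ Finset.range m).filter (fun p => p.1 < p.2 ∧ w p.2 < w p.1)).card

/-- Weak descents (0-based indices `i` with `0 ≤ i < n-1`). -/
def wDesEq (w : ℕ → ℕ) (n : ℕ) : Finset ℕ :=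
  (Finset.range (n-1)).filter (fun i => w i = i + 1 ∧ w (i+1) = i)

/-- Weak ascents. -/
def wAscEq (w : ℕ → ℕ) (n : ℕ) : Finset ℕ :=
  (Finset.range (n-1)).filter (fun i => n ≤ w i ∧ n ≤ w (i+1))

/-- Strict descents. -/
def wDesLt (w : ℕ → ℕ) (n : ℕ) : Finset ℕ :=
  ((Finset.range (n-1)).filter (fun i => w (i+1) < w i)) \ (wAscEq w n ∪ wDesEq w n)

/-- Strict ascents. -/
def wAscLt (w : ℕ → ℕ) (n : ℕ) : Finset ℕ :=
  ((Finset.range (n-1)).filter (fun i => w i < w (i+1))) \ wAscEq w n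

/-- Delete all boxes of `T` whose entry exceeds `n`. -/
def restrictT (T : List (List ℕ)) (n : ℕ) : List (List ℕ) :=
  (T.map (fun r => r.filter (fun x => decide (x ≤ n)))).filter (fun r => !r.isEmpty)

/-- The 0-based indices of the odd columns of `T`, in increasing order. -/
def oddColsList (T : List (List ℕ)) : List ℕ :=
  (List.range (T.headD []).length).filter (fun c => decide (colLen T c % 2 = 1))

/-- Given a standard tableau `T` with `n` boxes and `k` odd columns, place
`n+1, …, n+k` at the bottoms of the odd columns from left to right, then add
`n+k+1, n+k+3, …, 2n-1` to the first row and `n+k+2, n+k+4, …, 2n` to the second row. -/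
def iotaRow (n : ℕ) (T : List (List ℕ)) : List (List ℕ) :=
  let cols := oddColsList T
  let k := cols.length
  let T1 := (cols.zipIdx.map Prod.swap).foldl (fun S ci => addAtCol S ci.2 (n + 1 + ci.1)) T
  let T2 := (List.range ((n - k) / 2)).foldl (fun S m => addAtRow S 0 (n + k + 1 + 2*m)) T1
  (List.range ((n - k) / 2)).foldl (fun S m => addAtRow S 1 (n + k + 2 + 2*m)) T2

/-- The number of transfer points: 0-based `i < n` with `w i ≥ n` (1-based `w(i) > n`). -/
def transferCount (w : ℕ → ℕ) (n : ℕ) : ℕ :=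
  ((List.range n).filter (fun i => decide (n ≤ w i))).length

/-- `G^asc_n`: the image of the ascending embedding. -/
def GAsc (n : ℕ) : Set (ℕ → ℕ) := {f | ∃ w : Equiv.Perm (Fin n), w * w = 1 ∧ f = iotaAsc w}

/-- `G^des_n`: the image of the descending embedding. -/
def GDes (n : ℕ) : Set (ℕ → ℕ) := {f | ∃ w : Equiv.Perm (Fin n), w * w = 1 ∧ f = iotaDes w}

/-- The value `e(j)` from the statement of Theorem on column Beissinger dual
equivalence: for 1-based `j`, `e(j) = -j` if `y(j) = j`; `e(j) = j` if
`j ≠ y(j) ∈ {i-1, i, i+1}`; and `e(j) = y(j)` otherwise. -/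
def eVal {n : ℕ} (y : Equiv.Perm (Fin n)) (i j : ℕ) : ℤ :=
  if act y j = j then -(j : ℤ)
  else if act y j ∈ ({i-1, i, i+1} : Finset ℕ) then (j : ℤ)
  else (act y j : ℤ)

/-- Schensted column insertion, via the transpose. -/
def colInsertT (T : List (List ℕ)) (x : ℕ) : List (List ℕ) :=
  transposeT (rsInsert (transposeT T) x)

/-- The (0-indexed) row in which Schensted column insertion of `x` adds a box. -/
def colBumpRow (T : List (List ℕ)) (x : ℕ) : ℕ := rsBumpCol (transposeT T) x

/-- The alternative column Beissinger insertion `T ⇐cBS (a,b)`: if `a = b`, add `a`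
at the end of the first row; if `a < b`, column insert `a` (adding a box in row `i`)
and add `b` at the end of row `i+1`. -/
def cBSalt (T : List (List ℕ)) (a b : ℕ) : List (List ℕ) :=
  if a = b then addAtRow T 0 a
  else addAtRow (colInsertT T a) (colBumpRow T a + 1) b

/-! ### Auxiliary development for the RSK symmetry theorem -/

open List

/-- Increment the `R`-th entry of a shape (appending a new row `1` if `R` is the length). -/
def incRow (s : List ℕ) (R : ℕ) : List ℕ :=
  if R < s.length then s.set R (s.getD R 0 + 1) else s ++ [1]

/-- The final row of a floating maximal entry initially at the end of row `R`,
after inserting the letters of `b`. -/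
def finR : List (List ℕ) → ℕ → List ℕ → ℕ
  | _, R, [] => R
  | T, R, y :: b => finR (rsInsert T y) (if rsBumpRow T y = R then R + 1 else R) b

lemma aux_insertRow_none {r : List ℕ} {x : ℕ}
    (h : r.findIdx? (fun y => decide (x < y)) = none) :
    insertRow r x = (r ++ [x], none) := by
  simp [insertRow, h]

lemma aux_insertRow_some {r : List ℕ} {x i z : ℕ}
    (h : r.findIdx? (fun y => decide (x < y)) = some i) (hz : r[i]? = some z) :
    insertRow r x = (r.set i x, some z) := by
  simp [insertRow, h, hz]

lemma aux_rsInsert_cons_none {r : List ℕ} {rest : List (List ℕ)} {x : ℕ}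
    (h : insertRow r x = (r ++ [x], none)) :
    rsInsert (r :: rest) x = (r ++ [x]) :: rest ∧ rsBumpRow (r :: rest) x = 0 := by
  constructor <;> simp [rsInsert, rsBumpRow, h]

lemma aux_rsInsert_cons_some {r r' : List ℕ} {rest : List (List ℕ)} {x z : ℕ}
    (h : insertRow r x = (r', some z)) :
    rsInsert (r :: rest) x = r' :: rsInsert rest z ∧
      rsBumpRow (r :: rest) x = rsBumpRow rest z + 1 := by
  constructor <;> simp [rsInsert, rsBumpRow, h]

lemma aux_findIdx?_some_lt {r : List ℕ} {p : ℕ → Bool} {i : ℕ}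
    (h : r.findIdx? p = some i) : i < r.length :=
  (List.findIdx?_eq_some_iff_findIdx_eq.mp h).1

lemma aux_addAtRow_nil (R k : ℕ) : addAtRow [] R k = [[k]] := by
  simp [addAtRow]

lemma aux_addAtRow_cons_zero (r : List ℕ) (rest : List (List ℕ)) (k : ℕ) :
    addAtRow (r :: rest) 0 k = (r ++ [k]) :: rest := by
  simp [addAtRow]

lemma aux_addAtRow_cons_succ (r : List ℕ) (rest : List (List ℕ)) (R k : ℕ) :
    addAtRow (r :: rest) (R + 1) k = r :: addAtRow rest R k := by
  by_cases h : R < rest.length <;>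
    simp [addAtRow, h, Nat.succ_lt_succ_iff, List.set]

lemma aux_rsInsert_of_max {T : List (List ℕ)} {x : ℕ} (h : ∀ z ∈ T.flatten, z < x) :
    rsInsert T x = addAtRow T 0 x ∧ rsBumpRow T x = 0 := by
  cases T with
  | nil => simp [rsInsert, rsBumpRow, aux_addAtRow_nil]
  | cons r rest =>
    have hnone : r.findIdx? (fun y => decide (x < y)) = none := by
      rw [List.findIdx?_eq_none_iff]
      intro y hy
      have : y < x := h y (by simp [hy])
      simp; omega
    obtain ⟨h1, h2⟩ := aux_rsInsert_cons_none (aux_insertRow_none hnone)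
    rw [h1, h2, aux_addAtRow_cons_zero]
    exact ⟨rfl, rfl⟩

lemma aux_mem_flatten_rsInsert {T : List (List ℕ)} {x z : ℕ}
    (hz : z ∈ (rsInsert T x).flatten) : z ∈ T.flatten ∨ z = x := by
  induction T generalizing x with
  | nil =>
    right
    simpa [rsInsert] using hz
  | cons r rest ih =>
    cases h : r.findIdx? (fun y => decide (x < y)) with
    | none =>
      rw [(aux_rsInsert_cons_none (aux_insertRow_none h)).1] at hz
      rw [List.flatten_cons] at hz ⊢
      rcases List.mem_append.mp hz with h1 | h1
      · rcases List.mem_append.mp h1 with h2 | h2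
        · exact Or.inl (List.mem_append.mpr (Or.inl h2))
        · right; simpa using h2
      · exact Or.inl (List.mem_append.mpr (Or.inr h1))
    | some i =>
      have hi := aux_findIdx?_some_lt h
      have hget : r[i]? = some r[i] := List.getElem?_eq_getElem hi
      rw [(aux_rsInsert_cons_some (aux_insertRow_some h hget)).1] at hz
      rw [List.flatten_cons] at hz ⊢
      rcases List.mem_append.mp hz with h1 | h1
      · rcases List.mem_or_eq_of_mem_set h1 with h2 | h2
        · exact Or.inl (List.mem_append.mpr (Or.inl h2))
        · exact Or.inr h2
      · rcases ih h1 with h2 | h2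
        · exact Or.inl (List.mem_append.mpr (Or.inr h2))
        · left
          refine List.mem_append.mpr (Or.inl ?_)
          rw [h2]; exact List.getElem_mem hi

lemma aux_mem_flatten_foldl {b : List ℕ} : ∀ {T : List (List ℕ)} {z : ℕ},
    z ∈ (b.foldl rsInsert T).flatten → z ∈ T.flatten ∨ z ∈ b := by
  induction b with
  | nil => intro T z h; exact Or.inl h
  | cons y b ih =>
    intro T z h
    rcases ih h with h' | h'
    · rcases aux_mem_flatten_rsInsert h' with h'' | h''
      · exact Or.inl h''
      · right; simp [h'']
    · right; simp [h']

lemma aux_length_shape (T : List (List ℕ)) : (shape T).length = T.length := by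
  simp [shape]

lemma aux_shape_getD (T : List (List ℕ)) (R : ℕ) :
    (shape T).getD R 0 = (T.getD R []).length := by
  simp only [shape, List.getD_eq_getElem?_getD, List.getElem?_map]
  cases T[R]? <;> simp

lemma aux_shape_addAtRow {T : List (List ℕ)} {R k : ℕ} (hR : R ≤ T.length) :
    shape (addAtRow T R k) = incRow (shape T) R := by
  by_cases h : R < T.length
  · rw [addAtRow, if_pos h, incRow, if_pos (by rw [aux_length_shape]; exact h)]
    rw [aux_shape_getD]
    simp [shape, List.map_set]
  · have hR' : R = T.length := le_antisymm hR (not_lt.mp h)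
    rw [addAtRow, if_neg h, incRow, if_neg (by rw [aux_length_shape]; exact h)]
    simp [shape]

lemma aux_incRow_cons (a : ℕ) (s : List ℕ) (R : ℕ) :
    incRow (a :: s) (R + 1) = a :: incRow s R := by
  by_cases h : R < s.length <;>
    simp [incRow, h, Nat.succ_lt_succ_iff, List.set]

lemma aux_incRow_cons_zero (a : ℕ) (s : List ℕ) :
    incRow (a :: s) 0 = (a + 1) :: s := by
  simp [incRow, List.set]

lemma aux_shape_rsInsert (T : List (List ℕ)) (x : ℕ) :
    shape (rsInsert T x) = incRow (shape T) (rsBumpRow T x) := by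
  induction T generalizing x with
  | nil => simp [rsInsert, rsBumpRow, shape, incRow]
  | cons r rest ih =>
    cases h : r.findIdx? (fun y => decide (x < y)) with
    | none =>
      obtain ⟨h1, h2⟩ := aux_rsInsert_cons_none (aux_insertRow_none h)
      rw [h1, h2]
      rw [show shape ((r ++ [x]) :: rest) = (r.length + 1) :: shape rest by simp [shape],
          show shape (r :: rest) = r.length :: shape rest from rfl, aux_incRow_cons_zero]
    | some i =>
      have hi := aux_findIdx?_some_lt h
      have hget : r[i]? = some r[i] := List.getElem?_eq_getElem hi
      obtain ⟨h1, h2⟩ := aux_rsInsert_cons_some (aux_insertRow_some h hget)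
      rw [h1, h2]
      rw [show shape ((r.set i x) :: rsInsert rest r[i]) =
            r.length :: shape (rsInsert rest r[i]) by simp [shape]]
      rw [show shape (r :: rest) = r.length :: shape rest by simp [shape]]
      rw [aux_incRow_cons, ih]

lemma aux_rsBumpRow_le (T : List (List ℕ)) (x : ℕ) : rsBumpRow T x ≤ T.length := by
  induction T generalizing x with
  | nil => simp [rsBumpRow]
  | cons r rest ih =>
    cases h : r.findIdx? (fun y => decide (x < y)) with
    | none =>
      rw [(aux_rsInsert_cons_none (aux_insertRow_none h)).2]
      simp
    | some i =>
      have hi := aux_findIdx?_some_lt h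
      have hget : r[i]? = some r[i] := List.getElem?_eq_getElem hi
      rw [(aux_rsInsert_cons_some (aux_insertRow_some h hget)).2]
      have h3 := ih r[i]
      simp only [List.length_cons]
      omega

lemma aux_length_incRow (s : List ℕ) (R : ℕ) :
    (incRow s R).length = if R < s.length then s.length else s.length + 1 := by
  by_cases h : R < s.length <;> simp [incRow, h]

lemma aux_length_rsInsert (T : List (List ℕ)) (x : ℕ) :
    (rsInsert T x).length = if rsBumpRow T x = T.length then T.length + 1 else T.length := by
  have h := congrArg List.length (aux_shape_rsInsert T x)
  rw [aux_length_shape, aux_length_incRow, aux_length_shape] at h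
  have hle := aux_rsBumpRow_le T x
  by_cases hb : rsBumpRow T x = T.length
  · rw [if_pos hb]; rw [if_neg (by omega)] at h; exact h
  · rw [if_neg hb]; rw [if_pos (by omega)] at h; exact h

lemma aux_Rnext_le {T : List (List ℕ)} {y R : ℕ} (hR : R ≤ T.length) :
    (if rsBumpRow T y = R then R + 1 else R) ≤ (rsInsert T y).length := by
  have h1 := aux_rsBumpRow_le T y
  have h2 := aux_length_rsInsert T y
  have hmono : T.length ≤ (rsInsert T y).length := by
    rw [h2]; split <;> omega
  by_cases hc : rsBumpRow T y = R
  · rw [if_pos hc]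
    rcases Nat.lt_or_ge R T.length with h | h
    · omega
    · rw [h2, if_pos (by omega)]
      omega
  · rw [if_neg hc]; omega

lemma aux_getD_set_self {s : List ℕ} {i v : ℕ} (h : i < s.length) :
    (s.set i v).getD i 0 = v := by
  simp [List.getD_eq_getElem?_getD, List.getElem?_set_self h]

lemma aux_getD_set_ne {s : List ℕ} {i j v : ℕ} (h : i ≠ j) :
    (s.set i v).getD j 0 = s.getD j 0 := by
  simp [List.getD_eq_getElem?_getD, List.getElem?_set_ne h]

lemma aux_incRow_inj {s : List ℕ} {a b : ℕ} (ha : a ≤ s.length) (hb : b ≤ s.length)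
    (h : incRow s a = incRow s b) : a = b := by
  by_contra hne
  have hlen := congrArg List.length h
  rw [aux_length_incRow, aux_length_incRow] at hlen
  rcases lt_or_eq_of_le ha with ha' | ha' <;> rcases lt_or_eq_of_le hb with hb' | hb'
  · have h1 : (incRow s a).getD a 0 = s.getD a 0 + 1 := by
      rw [incRow, if_pos ha', aux_getD_set_self ha']
    have h2 : (incRow s b).getD a 0 = s.getD a 0 := by
      rw [incRow, if_pos hb', aux_getD_set_ne (Ne.symm hne)]
    rw [h] at h1; omega
  · rw [if_pos ha', if_neg (by omega)] at hlen; omega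
  · rw [if_neg (by omega), if_pos hb'] at hlen; omega
  · omega

lemma aux_getD_append_left {s t : List ℕ} {i : ℕ} (h : i < s.length) :
    (s ++ t).getD i 0 = s.getD i 0 := by
  simp [List.getD_eq_getElem?_getD, List.getElem?_append_left h]

lemma aux_incRow_comm {s : List ℕ} {a b : ℕ} (hne : a ≠ b)
    (ha : a ≤ s.length) (hb : b ≤ s.length) :
    incRow (incRow s a) b = incRow (incRow s b) a := by
  rcases lt_or_eq_of_le ha with ha' | ha' <;> rcases lt_or_eq_of_le hb with hb' | hb'
  · rw [show incRow s a = s.set a (s.getD a 0 + 1) from if_pos ha',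
        show incRow s b = s.set b (s.getD b 0 + 1) from if_pos hb']
    rw [incRow, if_pos (by simpa using hb'), aux_getD_set_ne hne,
        incRow, if_pos (by simpa using ha'), aux_getD_set_ne (Ne.symm hne)]
    exact List.set_comm _ _ hne
  · -- a < s.length, b = s.length
    rw [show incRow s a = s.set a (s.getD a 0 + 1) from if_pos ha']
    rw [show incRow s b = s ++ [1] from if_neg (by omega)]
    rw [incRow, if_neg (by simp; omega)]
    rw [incRow, if_pos (by simp; omega), aux_getD_append_left ha',
        List.set_append_left _ _ ha']
  · -- a = s.length, b < s.length
    rw [show incRow s a = s ++ [1] from if_neg (by omega)]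
    rw [show incRow s b = s.set b (s.getD b 0 + 1) from if_pos hb']
    rw [incRow, if_pos (by simp; omega), aux_getD_append_left hb',
        List.set_append_left _ _ hb']
    rw [incRow, if_neg (by simp; omega)]
  · omega

/-- Key commuting lemma: inserting `y` into `T` with a floating maximal entry `m`
at the end of row `R`. -/
lemma aux_lemB {m : ℕ} : ∀ (T : List (List ℕ)) (R y : ℕ),
    (∀ z ∈ T.flatten, z < m) → y < m → R ≤ T.length →
    rsInsert (addAtRow T R m) y =
      addAtRow (rsInsert T y) (if rsBumpRow T y = R then R + 1 else R) m := by
  intro T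
  induction T with
  | nil =>
    intro R y hT hy hR
    have hR0 : R = 0 := Nat.le_zero.mp hR
    subst hR0
    rw [aux_addAtRow_nil]
    have hfi : [m].findIdx? (fun z => decide (y < z)) = some 0 := by
      simp [List.findIdx?_cons, hy]
    have hget : [m][0]? = some m := rfl
    rw [(aux_rsInsert_cons_some (aux_insertRow_some hfi hget)).1]
    show [m].set 0 y :: rsInsert [] m = _
    rw [show rsInsert [] y = [[y]] from rfl, show rsBumpRow [] y = 0 from rfl]
    simp [rsInsert, addAtRow, List.set]
  | cons r rest ih =>
    intro R y hT hy hR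
    have hTr : ∀ z ∈ r, z < m := fun z hz => hT z (by simp [hz])
    have hTrest : ∀ z ∈ rest.flatten, z < m := fun z hz => hT z (by simp [hz])
    cases R with
    | zero =>
      rw [aux_addAtRow_cons_zero]
      cases h : r.findIdx? (fun z => decide (y < z)) with
      | none =>
        have hidx : (r ++ [m]).findIdx? (fun z => decide (y < z)) = some r.length := by
          rw [List.findIdx?_append, h]
          simp [List.findIdx?_cons, hy]
        have hget : (r ++ [m])[r.length]? = some m := by simp
        have hset : (r ++ [m]).set r.length y = r ++ [y] := by
          rw [List.set_append_right _ _ (le_refl _)]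
          simp [List.set]
        rw [(aux_rsInsert_cons_some (aux_insertRow_some hidx hget)).1, hset,
            (aux_rsInsert_of_max hTrest).1]
        obtain ⟨e1, e2⟩ := aux_rsInsert_cons_none (aux_insertRow_none h)
        rw [e1, e2, if_pos rfl, aux_addAtRow_cons_succ]
      | some i =>
        have hi := aux_findIdx?_some_lt h
        have hz : r[i]? = some r[i] := List.getElem?_eq_getElem hi
        have hidx : (r ++ [m]).findIdx? (fun z => decide (y < z)) = some i := by
          rw [List.findIdx?_append, h]; rfl
        have hget : (r ++ [m])[i]? = some r[i] := by
          rw [List.getElem?_append_left hi]; exact hz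
        have hset : (r ++ [m]).set i y = r.set i y ++ [m] :=
          List.set_append_left _ _ hi
        rw [(aux_rsInsert_cons_some (aux_insertRow_some hidx hget)).1, hset]
        obtain ⟨e1, e2⟩ := aux_rsInsert_cons_some (aux_insertRow_some h hz)
        rw [e1, e2, if_neg (Nat.succ_ne_zero _), aux_addAtRow_cons_zero]
    | succ S =>
      have hS : S ≤ rest.length := by simpa using hR
      rw [aux_addAtRow_cons_succ]
      cases h : r.findIdx? (fun z => decide (y < z)) with
      | none =>
        rw [(aux_rsInsert_cons_none (aux_insertRow_none h)).1]
        obtain ⟨e1, e2⟩ := aux_rsInsert_cons_none (aux_insertRow_none h)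
        rw [e1, e2, if_neg (by omega), aux_addAtRow_cons_succ]
      | some i =>
        have hi := aux_findIdx?_some_lt h
        have hz : r[i]? = some r[i] := List.getElem?_eq_getElem hi
        have hzm : r[i] < m := hTr _ (List.getElem_mem hi)
        rw [(aux_rsInsert_cons_some (aux_insertRow_some h hz)).1]
        rw [ih S r[i] hTrest hzm hS]
        obtain ⟨e1, e2⟩ := aux_rsInsert_cons_some (aux_insertRow_some h hz)
        rw [e1, e2]
        by_cases hbs : rsBumpRow rest r[i] = S
        · rw [if_pos hbs, if_pos (by omega), aux_addAtRow_cons_succ]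
        · rw [if_neg hbs, if_neg (by omega), aux_addAtRow_cons_succ]

/-- Iterated version: the floating maximal entry after inserting a word `b`. -/
lemma aux_lemL {m : ℕ} : ∀ (b : List ℕ) (T : List (List ℕ)) (R : ℕ),
    (∀ y ∈ b, y < m) → (∀ z ∈ T.flatten, z < m) → R ≤ T.length →
    b.foldl rsInsert (addAtRow T R m) = addAtRow (b.foldl rsInsert T) (finR T R b) m ∧
      finR T R b ≤ (b.foldl rsInsert T).length := by
  intro b
  induction b with
  | nil => intro T R _ _ hR; exact ⟨rfl, hR⟩
  | cons y b ih =>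
    intro T R hb hT hR
    have hy : y < m := hb y (by simp)
    simp only [List.foldl_cons, finR]
    rw [aux_lemB T R y hT hy hR]
    exact ih (rsInsert T y) _ (fun y' h => hb _ (by simp [h]))
      (fun z hz => by rcases aux_mem_flatten_rsInsert hz with h' | h'
                      · exact hT z h'
                      · omega)
      (aux_Rnext_le hR)

lemma aux_PRS_append (u v : List ℕ) : PRS (u ++ v) = v.foldl rsInsert (PRS u) := by
  simp [PRS, List.foldl_append]

lemma aux_PRS_snoc (u : List ℕ) (x : ℕ) : PRS (u ++ [x]) = rsInsert (PRS u) x := by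
  simp [aux_PRS_append]

lemma aux_mem_PRS {u : List ℕ} {z : ℕ} (h : z ∈ (PRS u).flatten) : z ∈ u := by
  rcases aux_mem_flatten_foldl (b := u) (T := []) h with h' | h'
  · simp at h'
  · exact h'

lemma aux_RSpair_fst (u : List ℕ) : (RSpair u).1 = PRS u := by
  have key : ∀ (l : List (ℕ × ℕ)) (pq : List (List ℕ) × List (List ℕ)),
      (l.foldl (fun pq ix =>
        (rsInsert pq.1 ix.2, addAtRow pq.2 (rsBumpRow pq.1 ix.2) (ix.1 + 1))) pq).1
        = (l.map Prod.snd).foldl rsInsert pq.1 := by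
    intro l
    induction l with
    | nil => intro pq; rfl
    | cons a l ih => intro pq; simp only [List.foldl_cons, List.map_cons]; rw [ih]
  rw [RSpair, key, List.map_map,
    show (Prod.snd ∘ Prod.swap : ℕ × ℕ → ℕ) = Prod.fst from rfl, List.zipIdx_map_fst, PRS]

lemma aux_QRS_snoc (u : List ℕ) (x : ℕ) :
    QRS (u ++ [x]) = addAtRow (QRS u) (rsBumpRow (PRS u) x) (u.length + 1) := by
  have h : RSpair (u ++ [x]) =
      (rsInsert (RSpair u).1 x,
        addAtRow (RSpair u).2 (rsBumpRow (RSpair u).1 x) (u.length + 1)) := by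
    rw [RSpair, List.zipIdx_append, List.map_append]
    rw [show ([x].zipIdx (0 + u.length)).map Prod.swap = [(u.length, x)] by simp]
    rw [List.foldl_append]
    rfl
  rw [QRS, h, aux_RSpair_fst]
  rfl

/-- The word of values `≤ j` (1-based) appearing in the first `i` positions. -/
def Lw (f : ℕ → ℕ) (i j : ℕ) : List ℕ :=
  ((List.range i).map fun p => f p + 1).filter fun v => decide (v ≤ j)

lemma aux_Lw_zero (f : ℕ → ℕ) (j : ℕ) : Lw f 0 j = [] := rfl

lemma aux_Lw_bot (f : ℕ → ℕ) (i : ℕ) : Lw f i 0 = [] := by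
  rw [Lw, List.filter_eq_nil_iff]
  intro v hv
  simp only [List.mem_map] at hv
  obtain ⟨p, _, rfl⟩ := hv
  simp

lemma aux_mem_Lw {f : ℕ → ℕ} {i j v : ℕ} :
    v ∈ Lw f i j ↔ ((∃ p, p < i ∧ f p + 1 = v) ∧ v ≤ j) := by
  simp [Lw, List.mem_filter, List.mem_map]

lemma aux_Lw_succ (f : ℕ → ℕ) (i j : ℕ) :
    Lw f (i + 1) j = Lw f i j ++ if f i + 1 ≤ j then [f i + 1] else [] := by
  rw [Lw, List.range_succ, List.map_append, List.filter_append]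
  rw [Lw]
  congr 1
  by_cases h : f i + 1 ≤ j <;> simp [h]

lemma aux_Lw_split {f : ℕ → ℕ} {n : ℕ}
    (hinj : ∀ p q, p < n → q < n → f p = f q → p = q) :
    ∀ i, i ≤ n → ∀ j,
      (∃ a b, Lw f i j = a ++ b ∧ Lw f i (j + 1) = a ++ (j + 1) :: b ∧ ∃ p, p < i ∧ f p = j)
      ∨ ((∀ p, p < i → f p ≠ j) ∧ Lw f i (j + 1) = Lw f i j) := by
  intro i
  induction i with
  | zero => intro _ j; right; exact ⟨fun p hp => absurd hp (by omega), rfl⟩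
  | succ i ih =>
    intro hi j
    have hi' : i ≤ n := Nat.le_of_succ_le hi
    rcases Nat.lt_trichotomy (f i) j with hA | hE | hC
    · rcases ih hi' j with ⟨a, b, e1, e2, p, hp, hpj⟩ | ⟨hne, e⟩
      · left
        refine ⟨a, b ++ [f i + 1], ?_, ?_, p, by omega, hpj⟩
        · rw [aux_Lw_succ, e1, if_pos (by omega), List.append_assoc]
        · rw [aux_Lw_succ, e2, if_pos (by omega)]
          simp
      · right
        refine ⟨fun p hp hpj => ?_, ?_⟩
        · rcases Nat.lt_or_ge p i with h' | h'
          · exact hne p h' hpj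
          · have hpi : p = i := by omega
            rw [hpi] at hpj
            omega
        · rw [aux_Lw_succ, aux_Lw_succ, e, if_pos (by omega), if_pos (by omega)]
    · have hnoprev : ∀ p, p < i → f p ≠ j := by
        intro p hp hpj
        have := hinj p i (lt_of_lt_of_le hp hi') (by omega) (hpj.trans hE.symm)
        omega
      rcases ih hi' j with ⟨a, b, _, _, p, hp, hpj⟩ | ⟨_, e⟩
      · exact absurd hpj (hnoprev p hp)
      · left
        refine ⟨Lw f i j, [], ?_, ?_, i, by omega, hE⟩
        · rw [aux_Lw_succ, if_neg (by omega)]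
        · rw [aux_Lw_succ, e, if_pos (by omega), hE]
    · rcases ih hi' j with ⟨a, b, e1, e2, p, hp, hpj⟩ | ⟨hne, e⟩
      · left
        refine ⟨a, b, ?_, ?_, p, by omega, hpj⟩
        · rw [aux_Lw_succ, e1, if_neg (by omega)]; simp
        · rw [aux_Lw_succ, e2, if_neg (by omega)]; simp
      · right
        refine ⟨fun p hp hpj => ?_, ?_⟩
        · rcases Nat.lt_or_ge p i with h' | h'
          · exact hne p h' hpj
          · have hpi : p = i := by omega
            rw [hpi] at hpj
            omega
        · rw [aux_Lw_succ, aux_Lw_succ, e, if_neg (by omega), if_neg (by omega)]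

lemma aux_Lw_eq_of_not_ex {f : ℕ → ℕ} {n : ℕ}
    (hinj : ∀ p q, p < n → q < n → f p = f q → p = q) {i j : ℕ} (hi : i ≤ n)
    (hne : ∀ p, p < i → f p ≠ j) : Lw f i (j + 1) = Lw f i j := by
  rcases aux_Lw_split hinj i hi j with ⟨a, b, _, _, p, hp, hpj⟩ | ⟨_, e⟩
  · exact absurd hpj (hne p hp)
  · exact e

lemma aux_PRS_entries_lt {f : ℕ → ℕ} {i j : ℕ} :
    ∀ z ∈ (PRS (Lw f i j)).flatten, z < j + 1 := by
  intro z hz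
  have := (aux_mem_Lw.mp (aux_mem_PRS hz)).2
  omega

/-- Inserting the new maximal value `j+1` into the word: the insertion tableau grows
by one box at the end of some row `R`. -/
lemma aux_tabStep {f : ℕ → ℕ} {n : ℕ}
    (hinj : ∀ p q, p < n → q < n → f p = f q → p = q) {i j : ℕ} (hi : i ≤ n)
    (hex : ∃ p, p < i ∧ f p = j) :
    ∃ R, R ≤ (PRS (Lw f i j)).length ∧
      PRS (Lw f i (j + 1)) = addAtRow (PRS (Lw f i j)) R (j + 1) := by
  rcases aux_Lw_split hinj i hi j with ⟨a, b, e1, e2, _⟩ | ⟨hne, _⟩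
  · have hb : ∀ y ∈ b, y < j + 1 := by
      intro y hy
      have : y ∈ Lw f i j := by rw [e1]; exact List.mem_append_right _ hy
      have := (aux_mem_Lw.mp this).2
      omega
    have haE : ∀ z ∈ (PRS a).flatten, z < j + 1 := by
      intro z hz
      have hz' : z ∈ Lw f i j := by rw [e1]; exact List.mem_append_left _ (aux_mem_PRS hz)
      have := (aux_mem_Lw.mp hz').2
      omega
    obtain ⟨hL, hle⟩ := aux_lemL b (PRS a) 0 hb haE (Nat.zero_le _)
    refine ⟨finR (PRS a) 0 b, ?_, ?_⟩
    · rw [e1, aux_PRS_append]; exact hle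
    · rw [e2, e1, aux_PRS_append, aux_PRS_append]
      simp only [List.foldl_cons]
      rw [(aux_rsInsert_of_max haE).1, hL]
  · obtain ⟨p, hp, hpj⟩ := hex
    exact absurd hpj (hne p hp)

/-- Growth-diagram symmetry: the shape of the insertion tableau of the subword of values
`≤ j` in positions `≤ i` is symmetric under inverting the permutation. -/
lemma aux_grid {n : ℕ} {f g : ℕ → ℕ}
    (hf : ∀ p, p < n → f p < n) (hg : ∀ q, q < n → g q < n)
    (hgf : ∀ p, p < n → g (f p) = p) (hfg : ∀ q, q < n → f (g q) = q) :
    ∀ N i j, i + j ≤ N → i ≤ n → j ≤ n →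
      shape (PRS (Lw f i j)) = shape (PRS (Lw g j i)) := by
  have hinjf : ∀ p q, p < n → q < n → f p = f q → p = q := by
    intro p q hp hq h
    rw [← hgf p hp, h, hgf q hq]
  have hinjg : ∀ p q, p < n → q < n → g p = g q → p = q := by
    intro p q hp hq h
    rw [← hfg p hp, h, hfg q hq]
  intro N
  induction N with
  | zero =>
    intro i j hij hi hj
    have hi0 : i = 0 := by omega
    have hj0 : j = 0 := by omega
    subst hi0; subst hj0; rfl
  | succ N IH =>
    intro i j hij hi hj
    cases i with
    | zero => rw [aux_Lw_zero, aux_Lw_bot]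
    | succ i' =>
      cases j with
      | zero => rw [aux_Lw_bot, aux_Lw_zero]
      | succ j' =>
        have hIH00 : shape (PRS (Lw f i' j')) = shape (PRS (Lw g j' i')) :=
          IH i' j' (by omega) (by omega) (by omega)
        have hIH10 : shape (PRS (Lw f (i' + 1) j')) = shape (PRS (Lw g j' (i' + 1))) :=
          IH (i' + 1) j' (by omega) (by omega) (by omega)
        have hIH01 : shape (PRS (Lw f i' (j' + 1))) = shape (PRS (Lw g (j' + 1) i')) :=
          IH i' (j' + 1) (by omega) (by omega) (by omega)
        rcases Nat.lt_trichotomy (f i') j' with hA | hE | hC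
        · by_cases hB : ∃ p, p < i' ∧ f p = j'
          · -- main case: boxes added in both directions
            have hB' : ∃ q, q < j' ∧ g q = i' := ⟨f i', hA, hgf i' (by omega)⟩
            have hA' : g j' < i' := by
              obtain ⟨p, hp, hpj⟩ := hB
              rw [← hpj, hgf p (by omega)]; exact hp
            obtain ⟨R, hRle, hstep⟩ := aux_tabStep hinjf (show i' ≤ n by omega) hB
            obtain ⟨R', hR'le, hstep'⟩ := aux_tabStep hinjg (show j' ≤ n by omega) hB'
            set Tf := PRS (Lw f i' j') with hTf
            set Tg := PRS (Lw g j' i') with hTg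
            set v := f i' + 1 with hv
            set v' := g j' + 1 with hv'
            set r := rsBumpRow Tf v with hr
            set r' := rsBumpRow Tg v' with hr'
            have ef : Lw f (i' + 1) (j' + 1) = Lw f i' (j' + 1) ++ [v] := by
              rw [aux_Lw_succ, if_pos (by omega)]
            have eg : Lw g (j' + 1) (i' + 1) = Lw g j' (i' + 1) ++ [v'] := by
              rw [aux_Lw_succ, if_pos (by omega)]
            have efr : Lw f (i' + 1) j' = Lw f i' j' ++ [v] := by
              rw [aux_Lw_succ, if_pos (by omega)]
            have egr : Lw g (j' + 1) i' = Lw g j' i' ++ [v'] := by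
              rw [aux_Lw_succ, if_pos (by omega)]
            have hρ : shape (PRS (Lw f (i' + 1) j')) = incRow (shape Tf) r := by
              rw [efr, aux_PRS_snoc, aux_shape_rsInsert]
            have hκ : shape (PRS (Lw f i' (j' + 1))) = incRow (shape Tf) R := by
              rw [hstep, aux_shape_addAtRow hRle]
            have hρ' : shape (PRS (Lw g (j' + 1) i')) = incRow (shape Tg) r' := by
              rw [egr, aux_PRS_snoc, aux_shape_rsInsert]
            have hκ' : shape (PRS (Lw g j' (i' + 1))) = incRow (shape Tg) R' := by
              rw [hstep', aux_shape_addAtRow hR'le]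
            have hlen : (shape Tf).length = (shape Tg).length := by rw [hIH00]
            have hrle : r ≤ (shape Tf).length := by
              rw [aux_length_shape]; exact aux_rsBumpRow_le _ _
            have hRle2 : R ≤ (shape Tf).length := by rw [aux_length_shape]; exact hRle
            have hr'le : r' ≤ (shape Tf).length := by
              rw [hlen, aux_length_shape]; exact aux_rsBumpRow_le _ _
            have hR'le2 : R' ≤ (shape Tf).length := by
              rw [hlen, aux_length_shape]; exact hR'le
            have id1 : r' = R := by
              apply aux_incRow_inj hr'le hRle2
              calc incRow (shape Tf) r' = incRow (shape Tg) r' := by rw [hIH00]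
                _ = shape (PRS (Lw g (j' + 1) i')) := hρ'.symm
                _ = shape (PRS (Lw f i' (j' + 1))) := hIH01.symm
                _ = incRow (shape Tf) R := hκ
            have id2 : R' = r := by
              apply aux_incRow_inj hR'le2 hrle
              calc incRow (shape Tf) R' = incRow (shape Tg) R' := by rw [hIH00]
                _ = shape (PRS (Lw g j' (i' + 1))) := hκ'.symm
                _ = shape (PRS (Lw f (i' + 1) j')) := hIH10.symm
                _ = incRow (shape Tf) r := hρ
            have hν : shape (PRS (Lw f (i' + 1) (j' + 1))) =
                incRow (incRow (shape Tf) r) (if r = R then R + 1 else R) := by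
              rw [ef, aux_PRS_snoc, hstep,
                  aux_lemB Tf R v aux_PRS_entries_lt (by omega) hRle,
                  aux_shape_addAtRow (aux_Rnext_le hRle), aux_shape_rsInsert]
            have hν' : shape (PRS (Lw g (j' + 1) (i' + 1))) =
                incRow (incRow (shape Tg) r') (if r' = R' then R' + 1 else R') := by
              rw [eg, aux_PRS_snoc, hstep',
                  aux_lemB Tg R' v' aux_PRS_entries_lt (by omega) hR'le,
                  aux_shape_addAtRow (aux_Rnext_le hR'le), aux_shape_rsInsert]
            rw [hν, hν', hIH00, id1, id2]
            by_cases hrR : r = R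
            · rw [hrR]
            · rw [if_neg hrR, if_neg (Ne.symm hrR)]
              exact aux_incRow_comm hrR (by rw [← hlen]; exact hrle)
                (by rw [← hlen]; exact hRle2)
          · -- box added only in the position direction
            have hnf : ∀ p, p < i' → f p ≠ j' := fun p hp hpj => hB ⟨p, hp, hpj⟩
            have hgj : ¬ g j' < i' := fun hlt => hB ⟨g j', hlt, hfg j' (by omega)⟩
            have hgne : g j' ≠ i' := by
              intro he
              have := hfg j' (by omega)
              rw [he] at this
              omega
            have ef : Lw f (i' + 1) (j' + 1) = Lw f (i' + 1) j' := by
              rw [aux_Lw_succ, aux_Lw_succ, aux_Lw_eq_of_not_ex hinjf (by omega) hnf,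
                  if_pos (by omega), if_pos (by omega)]
            have eg : Lw g (j' + 1) (i' + 1) = Lw g j' (i' + 1) := by
              rw [aux_Lw_succ, if_neg (by omega)]
              simp
            rw [ef, eg]
            exact hIH10
        · -- the new box (i'+1, j'+1) is an entry of the permutation
          have hE' : g j' = i' := by rw [← hE]; exact hgf i' (by omega)
          have hnf : ∀ p, p < i' → f p ≠ j' := by
            intro p hp hpj
            have := hinjf p i' (by omega) (by omega) (hpj.trans hE.symm)
            omega
          have hng : ∀ q, q < j' → g q ≠ i' := by
            intro q hq hqi
            have := hinjg q j' (by omega) (by omega) (hqi.trans hE'.symm)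
            omega
          have ef : Lw f (i' + 1) (j' + 1) = Lw f i' j' ++ [j' + 1] := by
            rw [aux_Lw_succ, if_pos (by omega), aux_Lw_eq_of_not_ex hinjf (by omega) hnf, hE]
          have eg : Lw g (j' + 1) (i' + 1) = Lw g j' i' ++ [i' + 1] := by
            rw [aux_Lw_succ, if_pos (by omega), aux_Lw_eq_of_not_ex hinjg (by omega) hng, hE']
          rw [ef, eg, aux_PRS_snoc, aux_PRS_snoc, aux_shape_rsInsert, aux_shape_rsInsert,
              (aux_rsInsert_of_max aux_PRS_entries_lt).2,
              (aux_rsInsert_of_max aux_PRS_entries_lt).2, hIH00]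
        · by_cases hB : ∃ p, p < i' ∧ f p = j'
          · -- box added only in the value direction
            have hA' : g j' < i' := by
              obtain ⟨p, hp, hpj⟩ := hB
              rw [← hpj, hgf p (by omega)]; exact hp
            have hnB' : ∀ q, q < j' → g q ≠ i' := by
              intro q hq hqi
              have := hfg q (by omega)
              rw [hqi] at this
              omega
            have ef : Lw f (i' + 1) (j' + 1) = Lw f i' (j' + 1) := by
              rw [aux_Lw_succ, if_neg (by omega)]
              simp
            have eg : Lw g (j' + 1) (i' + 1) = Lw g (j' + 1) i' := by
              rw [aux_Lw_succ, aux_Lw_succ, aux_Lw_eq_of_not_ex hinjg (by omega) hnB',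
                  if_pos (by omega), if_pos (by omega)]
            rw [ef, eg]
            exact hIH01
          · -- no box added
            have hnf : ∀ p, p < i' → f p ≠ j' := fun p hp hpj => hB ⟨p, hp, hpj⟩
            have hnB' : ∀ q, q < j' → g q ≠ i' := by
              intro q hq hqi
              have := hfg q (by omega)
              rw [hqi] at this
              omega
            have hgj : ¬ g j' < i' := fun hlt => hB ⟨g j', hlt, hfg j' (by omega)⟩
            have hgne : g j' ≠ i' := by
              intro he
              have := hfg j' (by omega)
              rw [he] at this
              omega
            have ef : Lw f (i' + 1) (j' + 1) = Lw f i' j' := by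
              rw [aux_Lw_succ, if_neg (by omega),
                  aux_Lw_eq_of_not_ex hinjf (by omega) hnf]
              simp
            have eg : Lw g (j' + 1) (i' + 1) = Lw g j' i' := by
              rw [aux_Lw_succ, if_neg (by omega),
                  aux_Lw_eq_of_not_ex hinjg (by omega) hnB']
              simp
            rw [ef, eg]
            exact hIH00

/-- Assembly: the recording tableau of the word equals the insertion tableau of the
inverse word, level by level. -/
lemma aux_main {n : ℕ} {f g : ℕ → ℕ}
    (hf : ∀ p, p < n → f p < n) (hg : ∀ q, q < n → g q < n)
    (hgf : ∀ p, p < n → g (f p) = p) (hfg : ∀ q, q < n → f (g q) = q) :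
    ∀ k, k ≤ n → QRS (Lw f k n) = PRS (Lw g n k) := by
  have hinjg : ∀ p q, p < n → q < n → g p = g q → p = q := by
    intro p q hp hq h
    rw [← hfg p hp, h, hfg q hq]
  intro k
  induction k with
  | zero => intro _; rw [aux_Lw_bot, aux_Lw_zero]; rfl
  | succ k ih =>
    intro hk1
    have hk : k < n := hk1
    have hwf : Lw f (k + 1) n = Lw f k n ++ [f k + 1] := by
      rw [aux_Lw_succ, if_pos (by have := hf k hk; omega)]
    have hlen : (Lw f k n).length = k := by
      rw [Lw, List.filter_eq_self.mpr, List.length_map, List.length_range]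
      intro v hv
      simp only [List.mem_map, List.mem_range] at hv
      obtain ⟨p, hp, rfl⟩ := hv
      have := hf p (by omega)
      simp
      omega
    have hB : ∃ p, p < n ∧ g p = k := ⟨f k, hf k hk, hgf k hk⟩
    obtain ⟨R, hRle, hstep⟩ := aux_tabStep hinjg (le_refl n) hB
    have hsh : shape (PRS (Lw f k n)) = shape (PRS (Lw g n k)) :=
      aux_grid hf hg hgf hfg (k + n) k n (le_refl _) (by omega) (le_refl n)
    have hsh2 : shape (PRS (Lw f (k + 1) n)) = shape (PRS (Lw g n (k + 1))) :=
      aux_grid hf hg hgf hfg (k + 1 + n) (k + 1) n (le_refl _) (by omega) (le_refl n)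
    have e1 : shape (PRS (Lw f (k + 1) n)) =
        incRow (shape (PRS (Lw g n k))) (rsBumpRow (PRS (Lw f k n)) (f k + 1)) := by
      rw [hwf, aux_PRS_snoc, aux_shape_rsInsert, hsh]
    have e2 : shape (PRS (Lw g n (k + 1))) = incRow (shape (PRS (Lw g n k))) R := by
      rw [hstep, aux_shape_addAtRow hRle]
    have hd : rsBumpRow (PRS (Lw f k n)) (f k + 1) = R := by
      apply aux_incRow_inj ?_ ?_ (by rw [← e1, hsh2, e2])
      · rw [← hsh, aux_length_shape]; exact aux_rsBumpRow_le _ _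
      · rw [aux_length_shape]; exact hRle
    rw [hwf, aux_QRS_snoc, hlen, ih (by omega), hd, ← hstep]

lemma aux_permFn_lt {n : ℕ} (z : Equiv.Perm (Fin n)) : ∀ p, p < n → permFn z p < n := by
  intro p hp
  simp only [permFn]
  rw [dif_pos hp]
  exact (z ⟨p, hp⟩).isLt

lemma aux_permFn_inv {n : ℕ} (z : Equiv.Perm (Fin n)) :
    ∀ p, p < n → permFn z⁻¹ (permFn z p) = p := by
  intro p hp
  have h1 : permFn z p = ((z ⟨p, hp⟩ : Fin n) : ℕ) := by
    simp only [permFn]; rw [dif_pos hp]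
  rw [h1]
  simp only [permFn]
  rw [dif_pos (z ⟨p, hp⟩).isLt]
  simp

lemma aux_wordOf_eq_Lw {n : ℕ} (z : Equiv.Perm (Fin n)) :
    wordOf z = Lw (permFn z) n n := by
  rw [wordOf, wordFn, Lw, List.filter_eq_self.mpr]
  intro v hv
  simp only [List.mem_map, List.mem_range] at hv
  obtain ⟨p, hp, rfl⟩ := hv
  have := aux_permFn_lt z p hp
  simp
  omega

/-- `Q_RS(w) = P_RS(w⁻¹)`. -/
theorem qrs_eq_prs_inv (n : ℕ) (w : Equiv.Perm (Fin n)) :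
    QRS (wordOf w) = PRS (wordOf w⁻¹) := by
  have hf := aux_permFn_lt w
  have hg := aux_permFn_lt w⁻¹
  have hgf := aux_permFn_inv w
  have hfg : ∀ q, q < n → permFn w (permFn w⁻¹ q) = q := by
    intro q hq
    have := aux_permFn_inv w⁻¹ q hq
    rwa [inv_inv] at this
  rw [aux_wordOf_eq_Lw w, aux_wordOf_eq_Lw w⁻¹]
  exact aux_main hf hg hgf hfg n (le_refl n)

end GelfandRSK
end

section
/- Row Beissinger insertion computes the RS tableau of an involution: if z ∈ S_n is an involution and (a_1,b_1), …, (a_q,b_q) are the pairs (a,b) with 1 ≤ a ≤ b = z(a) ≤ n ordered so that b_1 < b_2 < ⋯ < b_q, then ∅ ←rBS (a_1,b_1) ←rBS ⋯ ←rBS (a_q,b_q) equals P_RS(z) = Q_RS(z). -/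
namespace GelfandRSK

section Aux

abbrev Tab := List (List ℕ)


theorem insertRow_nil (x : ℕ) : insertRow [] x = ([x], none) := rfl

theorem insertRow_cons (a x : ℕ) (l : List ℕ) :
    insertRow (a :: l) x = if x < a then (x :: l, some a)
      else ((insertRow l x).1.cons a, (insertRow l x).2) := by
  unfold insertRow
  rw [List.findIdx?_cons]
  by_cases h : x < a
  · simp [h]
  · rw [if_neg (by simpa using h)]
    cases h' : l.findIdx? (fun y => decide (x < y)) with
    | none => simp [h, h']
    | some j => simp [h, h']


theorem insertRow_none_eq {r : List ℕ} {x : ℕ} (h : (insertRow r x).2 = none) :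
    (insertRow r x).1 = r ++ [x] := by
  induction r with
  | nil => rfl
  | cons a l ih =>
    rw [insertRow_cons] at h ⊢
    by_cases hx : x < a
    · rw [if_pos hx] at h; simp at h
    · rw [if_neg hx] at h ⊢
      simp at h ⊢
      exact ih h

theorem insertRow_of_max {r : List ℕ} {x : ℕ} (h : ∀ v ∈ r, v < x) :
    insertRow r x = (r ++ [x], none) := by
  induction r with
  | nil => rfl
  | cons a l ih =>
    rw [insertRow_cons, if_neg (by simpa using le_of_lt (h a (by simp))),
      ih (fun v hv => h v (by simp [hv]))]
    simp

theorem insertRow_mem {r : List ℕ} {x v : ℕ} (h : v ∈ (insertRow r x).1) : v ∈ r ∨ v = x := by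
  induction r with
  | nil => simpa [insertRow_nil] using h
  | cons a l ih =>
    rw [insertRow_cons] at h
    by_cases hx : x < a
    · rw [if_pos hx] at h
      simp at h
      rcases h with h | h
      · right; exact h
      · left; simp [h]
    · rw [if_neg hx] at h
      simp at h
      rcases h with h | h
      · left; simp [h]
      · rcases ih h with h | h
        · left; simp [h]
        · right; exact h

theorem insertRow_bump_mem {r : List ℕ} {x y : ℕ} (h : (insertRow r x).2 = some y) : y ∈ r := by
  induction r with
  | nil => simp [insertRow_nil] at h
  | cons a l ih =>
    rw [insertRow_cons] at h
    by_cases hx : x < a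
    · rw [if_pos hx] at h; simp at h; simp [h]
    · rw [if_neg hx] at h; simp at h; simp [ih h]

theorem insertRow_length {r : List ℕ} {x : ℕ} :
    (insertRow r x).1.length = if (insertRow r x).2 = none then r.length + 1 else r.length := by
  induction r with
  | nil => rfl
  | cons a l ih =>
    rw [insertRow_cons]
    by_cases hx : x < a
    · rw [if_pos hx]; simp
    · rw [if_neg hx]; simp only [List.length_cons]
      rw [ih]
      by_cases h2 : (insertRow l x).2 = none <;> simp [h2]

theorem insertRow_append_of_bump {r : List ℕ} {x y b : ℕ} (h : (insertRow r x).2 = some y) :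
    insertRow (r ++ [b]) x = ((insertRow r x).1 ++ [b], some y) := by
  induction r with
  | nil => simp [insertRow_nil] at h
  | cons a l ih =>
    rw [insertRow_cons] at h
    rw [List.cons_append, insertRow_cons, insertRow_cons]
    by_cases hx : x < a
    · rw [if_pos hx] at h
      simp at h
      rw [if_pos hx, if_pos hx]
      simp [h]
    · rw [if_neg hx] at h
      simp at h
      rw [if_neg hx, if_neg hx, ih h]
      simp

theorem insertRow_append_of_none {r : List ℕ} {x b : ℕ} (hx : x < b)
    (h : (insertRow r x).2 = none) :
    insertRow (r ++ [b]) x = (r ++ [x], some b) := by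
  induction r with
  | nil => simp [insertRow_nil, insertRow_cons, hx]
  | cons a l ih =>
    rw [insertRow_cons] at h
    rw [List.cons_append, insertRow_cons]
    by_cases hxa : x < a
    · rw [if_pos hxa] at h; simp at h
    · rw [if_neg hxa] at h
      simp at h
      rw [if_neg hxa, ih h]
      simp

theorem insertRow_spec {r : List ℕ} {x i : ℕ} (hi : i < r.length)
    (hbefore : ∀ v ∈ r.take i, v ≤ x) (hat : x < r.getD i 0) :
    insertRow r x = (r.set i x, some (r.getD i 0)) := by
  induction r generalizing i with
  | nil => simp at hi
  | cons a l ih =>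
    cases i with
    | zero => simp at hat; simp [insertRow_cons, hat]
    | succ i =>
      have ha : ¬ x < a := by
        have := hbefore a (by simp [List.take_succ_cons]); omega
      simp at hi
      rw [insertRow_cons, if_neg ha,
        ih hi (fun v hv => hbefore v (by simp [List.take_succ_cons, hv])) hat]
      simp


theorem rsInsert_cons (r : List ℕ) (rest : Tab) (x : ℕ) :
    rsInsert (r :: rest) x =
      (insertRow r x).1 :: ((insertRow r x).2.elim rest (fun y => rsInsert rest y)) := by
  rw [rsInsert]
  rcases h : insertRow r x with ⟨r', o⟩
  cases o <;> simp

theorem rsBumpRow_cons (r : List ℕ) (rest : Tab) (x : ℕ) :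
    rsBumpRow (r :: rest) x = (insertRow r x).2.elim 0 (fun y => rsBumpRow rest y + 1) := by
  rw [rsBumpRow]
  rcases h : insertRow r x with ⟨r', o⟩
  cases o <;> simp

theorem rsBumpRow_le (T : Tab) (x : ℕ) : rsBumpRow T x ≤ T.length := by
  induction T generalizing x with
  | nil => simp [rsBumpRow]
  | cons r rest ih =>
    rw [rsBumpRow_cons]
    cases h : (insertRow r x).2 with
    | none => simp
    | some y => simpa using ih y

theorem rsInsert_length (T : Tab) (x : ℕ) :
    (rsInsert T x).length = if rsBumpRow T x = T.length then T.length + 1 else T.length := by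
  induction T generalizing x with
  | nil => simp [rsInsert, rsBumpRow]
  | cons r rest ih =>
    rw [rsInsert_cons, rsBumpRow_cons]
    cases h : (insertRow r x).2 with
    | none => simp
    | some y =>
      simp only [Option.elim, List.length_cons]
      rw [ih y]
      by_cases h2 : rsBumpRow rest y = rest.length <;> simp [h2]


theorem addAtRow_nil (r k : ℕ) : addAtRow [] r k = [[k]] := by simp [addAtRow]

theorem addAtRow_cons_succ (row : List ℕ) (rest : Tab) (m k : ℕ) :
    addAtRow (row :: rest) (m+1) k = row :: addAtRow rest m k := by
  unfold addAtRow
  by_cases h : m < rest.length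
  · rw [if_pos (by simpa using h), if_pos h]; simp [List.getD_cons_succ]
  · rw [if_neg (by simpa using h), if_neg h]; simp

theorem addAtRow_zero (T : Tab) (k : ℕ) :
    addAtRow T 0 k = (T.getD 0 [] ++ [k]) :: T.tail := by
  cases T with
  | nil => simp [addAtRow]
  | cons r rest => simp [addAtRow]

theorem length_addAtRow (T : Tab) (r k : ℕ) (h : r ≤ T.length) :
    (addAtRow T r k).length = if r < T.length then T.length else T.length + 1 := by
  unfold addAtRow
  by_cases h' : r < T.length <;> simp [h']

theorem getD_addAtRow (T : Tab) (r k i : ℕ) (h : r ≤ T.length) :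
    (addAtRow T r k).getD i [] = if i = r then T.getD r [] ++ [k] else T.getD i [] := by
  unfold addAtRow
  by_cases h' : r < T.length
  · rw [if_pos h']
    rcases Nat.lt_or_ge i T.length with hi | hi
    · by_cases he : i = r
      · subst he
        simp [List.getD_eq_getElem?_getD, List.getElem?_set, hi, h']
      · simp [List.getD_eq_getElem?_getD, List.getElem?_set, Ne.symm he, he]
    · have : i ≠ r := by omega
      simp [List.getD_eq_getElem?_getD, List.getElem?_set, this, Ne.symm this]
  · rw [if_neg h']
    have hr : r = T.length := by omega
    subst hr
    rcases Nat.lt_trichotomy i T.length with hi | hi | hi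
    · rw [if_neg (by omega)]
      rw [List.getD_eq_getElem?_getD, List.getElem?_append_left hi, ← List.getD_eq_getElem?_getD]
    · subst hi
      rw [if_pos rfl]
      rw [List.getD_eq_getElem?_getD, List.getElem?_append_right (le_refl _)]
      rw [List.getD_eq_default _ _ (le_refl _)]
      simp
    · rw [if_neg (by omega)]
      rw [List.getD_eq_getElem?_getD, List.getElem?_append_right (by omega)]
      have h1 : i - T.length ≥ 1 := by omega
      have : T.getD i [] = [] := List.getD_eq_default _ _ (by omega)
      rw [this]
      rw [List.getElem?_eq_none (by simpa using h1)]
      rfl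

theorem mem_flatten_addAtRow {T : Tab} {r k v : ℕ} (h : v ∈ (addAtRow T r k).flatten) :
    v ∈ T.flatten ∨ v = k := by
  unfold addAtRow at h
  by_cases h' : r < T.length
  · rw [if_pos h'] at h
    rcases List.mem_flatten.1 h with ⟨row, hrow, hv⟩
    rcases List.mem_or_eq_of_mem_set hrow with h2 | h2
    · exact Or.inl (List.mem_flatten.2 ⟨row, h2, hv⟩)
    · subst h2
      rcases List.mem_append.1 hv with h3 | h3
      · refine Or.inl (List.mem_flatten.2 ⟨_, ?_, h3⟩)
        rw [List.getD_eq_getElem _ _ h']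
        exact List.getElem_mem _
      · simp at h3; exact Or.inr h3
  · rw [if_neg h'] at h
    simp at h
    rcases h with h | h
    · exact Or.inl (List.mem_flatten.2 (by simpa using h))
    · exact Or.inr h

theorem len_getD (T : Tab) (t : ℕ) : (T.getD t []).length = (shape T).getD t 0 := by
  rcases Nat.lt_or_ge t T.length with h | h
  · rw [List.getD_eq_getElem _ _ h, List.getD_eq_getElem _ _ (by simpa [shape] using h)]
    simp [shape]
  · rw [List.getD_eq_default _ _ h, List.getD_eq_default _ _ (by simpa [shape] using h)]
    rfl

theorem shape_length (T : Tab) : (shape T).length = T.length := by simp [shape]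

theorem getD_length_of_shape {X Y : Tab} (h : shape X = shape Y) (t : ℕ) :
    (X.getD t []).length = (Y.getD t []).length := by
  rw [len_getD, len_getD, h]

theorem shape_addAtRow_congr {X Y : Tab} (h : shape X = shape Y) (r k k' : ℕ) :
    shape (addAtRow X r k) = shape (addAtRow Y r k') := by
  have hlen : X.length = Y.length := by
    rw [← shape_length X, ← shape_length Y, h]
  unfold addAtRow
  by_cases h' : r < X.length
  · rw [if_pos h', if_pos (hlen ▸ h')]
    rw [shape, shape, List.map_set, List.map_set,
      show List.map List.length X = List.map List.length Y from h]
    congr 1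
    simp only [List.length_append]
    rw [getD_length_of_shape h]
    simp
  · rw [if_neg h', if_neg (hlen ▸ h')]
    rw [shape, shape, List.map_append, List.map_append,
      show List.map List.length X = List.map List.length Y from h]
    rfl

theorem mem_flatten_rsInsert {T : Tab} {x v : ℕ} (h : v ∈ (rsInsert T x).flatten) :
    v ∈ T.flatten ∨ v = x := by
  induction T generalizing x with
  | nil => simpa [rsInsert] using h
  | cons r rest ih =>
    rw [rsInsert_cons] at h
    cases h2 : (insertRow r x).2 with
    | none =>
      rw [h2] at h
      simp at h
      rcases h with h | h
      · rcases insertRow_mem h with h3 | h3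
        · exact Or.inl (by simp [h3])
        · exact Or.inr h3
      · exact Or.inl (by simp [h])
    | some y =>
      rw [h2] at h
      simp at h
      rcases h with h | h
      · rcases insertRow_mem h with h3 | h3
        · exact Or.inl (by simp [h3])
        · exact Or.inr h3
      · rcases ih (List.mem_flatten.2 (by simpa using h)) with h3 | h3
        · exact Or.inl (by simp [h3])
        · subst h3
          exact Or.inl (by simp [insertRow_bump_mem h2])

theorem rsInsert_max {T : Tab} {x : ℕ} (h : ∀ v ∈ T.flatten, v < x) :
    rsInsert T x = addAtRow T 0 x ∧ rsBumpRow T x = 0 := by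
  cases T with
  | nil => simp [rsInsert, rsBumpRow, addAtRow]
  | cons r rest =>
    have : insertRow r x = (r ++ [x], none) := insertRow_of_max (fun v hv => h v (by simp [hv]))
    rw [rsInsert_cons, rsBumpRow_cons, this, addAtRow_zero]
    simp

theorem shape_rsInsert (T : Tab) (x : ℕ) :
    shape (rsInsert T x) = shape (addAtRow T (rsBumpRow T x) 0) := by
  induction T generalizing x with
  | nil => simp [rsInsert, rsBumpRow, addAtRow, shape]
  | cons r rest ih =>
    rw [rsInsert_cons, rsBumpRow_cons]
    cases h2 : (insertRow r x).2 with
    | none =>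
      rw [insertRow_none_eq h2]
      simp [addAtRow_zero, shape]
    | some y =>
      simp only [Option.elim]
      rw [addAtRow_cons_succ]
      have hl : (insertRow r x).1.length = r.length := by
        rw [insertRow_length, if_neg (by simp [h2])]
      have := ih y
      simp only [shape] at this ⊢
      simp [hl, this]

theorem lemmaM {b : ℕ} : ∀ (m : ℕ) (T : Tab) (x : ℕ),
    (∀ v ∈ T.flatten, v < b) → x < b → m ≤ T.length →
    (rsBumpRow T x = m →
      rsInsert (addAtRow T m b) x = addAtRow (rsInsert T x) (m+1) b ∧
      rsBumpRow (addAtRow T m b) x = m + 1) ∧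
    (rsBumpRow T x ≠ m →
      rsInsert (addAtRow T m b) x = addAtRow (rsInsert T x) m b ∧
      rsBumpRow (addAtRow T m b) x = rsBumpRow T x) := by
  intro m
  induction m with
  | zero =>
    intro T x hb hx _
    cases T with
    | nil =>
      constructor
      · intro _
        rw [addAtRow_nil]
        constructor
        · show rsInsert ([b] :: []) x = _
          rw [rsInsert_cons, insertRow_cons, if_pos hx]
          show [x] :: rsInsert [] b = _
          show [[x], [b]] = addAtRow [[x]] 1 b
          rw [addAtRow]
          simp
        · show rsBumpRow ([b] :: []) x = 1
          rw [rsBumpRow_cons, insertRow_cons, if_pos hx]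
          simp [rsBumpRow]
      · intro h; exact absurd (by simp [rsBumpRow]) h
    | cons r rest =>
      have hbr : ∀ v ∈ rest.flatten, v < b := fun v hv => hb v (by simp [hv])
      rw [addAtRow_zero]
      simp only [List.getD_cons_zero, List.tail_cons]
      cases h2 : (insertRow r x).2 with
      | none =>
        have hbump0 : rsBumpRow (r :: rest) x = 0 := by
          rw [rsBumpRow_cons, h2]; rfl
        constructor
        · intro _
          have hins := insertRow_append_of_none hx h2
          have hmax := rsInsert_max (T := rest) (x := b) hbr
          constructor
          · rw [rsInsert_cons, hins]
            simp only [Option.elim]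
            rw [hmax.1, rsInsert_cons, h2]
            simp only [Option.elim]
            rw [insertRow_none_eq h2, addAtRow_cons_succ]
          · rw [rsBumpRow_cons, hins]
            simp only [Option.elim]
            rw [hmax.2]
        · intro h; exact absurd hbump0 h
      | some y =>
        have hbump : rsBumpRow (r :: rest) x = rsBumpRow rest y + 1 := by
          rw [rsBumpRow_cons, h2]; rfl
        constructor
        · intro h; omega
        · intro _
          constructor
          · rw [rsInsert_cons, insertRow_append_of_bump h2]
            simp only [Option.elim]
            rw [rsInsert_cons, h2]
            simp only [Option.elim]
            rw [addAtRow_zero]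
            simp
          · rw [rsBumpRow_cons, insertRow_append_of_bump h2]
            simp only [Option.elim]
            rw [hbump]
  | succ m ih =>
    intro T x hb hx hm
    cases T with
    | nil => simp at hm
    | cons r rest =>
      have hbr : ∀ v ∈ rest.flatten, v < b := fun v hv => hb v (by simp [hv])
      have hm' : m ≤ rest.length := by simpa using hm
      rw [addAtRow_cons_succ]
      cases h2 : (insertRow r x).2 with
      | none =>
        have hbump0 : rsBumpRow (r :: rest) x = 0 := by rw [rsBumpRow_cons, h2]; rfl
        constructor
        · intro h; omega
        · intro _
          constructor
          · rw [rsInsert_cons, h2, rsInsert_cons, h2]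
            simp only [Option.elim]
            rw [addAtRow_cons_succ]
          · rw [rsBumpRow_cons, h2, hbump0]
            rfl
      | some y =>
        have hy : y < b := hb y (by simp [insertRow_bump_mem h2])
        have hbump : rsBumpRow (r :: rest) x = rsBumpRow rest y + 1 := by
          rw [rsBumpRow_cons, h2]; rfl
        obtain ⟨ihHit, ihMiss⟩ := ih rest y hbr hy hm'
        constructor
        · intro h
          have hR : rsBumpRow rest y = m := by omega
          obtain ⟨e1, e2⟩ := ihHit hR
          constructor
          · rw [rsInsert_cons, h2, rsInsert_cons, h2]
            simp only [Option.elim]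
            rw [e1, addAtRow_cons_succ]
          · rw [rsBumpRow_cons, h2]
            simp only [Option.elim]
            rw [e2]
        · intro h
          have hR : rsBumpRow rest y ≠ m := by omega
          obtain ⟨e1, e2⟩ := ihMiss hR
          constructor
          · rw [rsInsert_cons, h2, rsInsert_cons, h2]
            simp only [Option.elim]
            rw [e1, addAtRow_cons_succ]
          · rw [rsBumpRow_cons, h2]
            simp only [Option.elim]
            rw [e2, hbump]

theorem insertRow_of_le {r : List ℕ} {x : ℕ} (h : ∀ v ∈ r, v ≤ x) :
    insertRow r x = (r ++ [x], none) := by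
  induction r with
  | nil => rfl
  | cons a l ih =>
    rw [insertRow_cons, if_neg (by simpa using h a (by simp)),
      ih (fun v hv => h v (by simp [hv]))]
    simp

theorem rsInsert_le_max {T : Tab} {x : ℕ} (h : ∀ v ∈ T.flatten, v ≤ x) :
    rsInsert T x = addAtRow T 0 x ∧ rsBumpRow T x = 0 := by
  cases T with
  | nil => simp [rsInsert, rsBumpRow, addAtRow]
  | cons r rest =>
    have : insertRow r x = (r ++ [x], none) := insertRow_of_le (fun v hv => h v (by simp [hv]))
    rw [rsInsert_cons, rsBumpRow_cons, this, addAtRow_zero]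
    simp

/-- chain modification: set box `(t, p t)` to `g t` for all `t < m`. -/
def mc : ℕ → (ℕ → ℕ) → (ℕ → ℕ) → Tab → Tab
  | 0, _, _, T => T
  | _+1, _, _, [] => []
  | m+1, g, p, r :: rest => r.set (p 0) (g 0) :: mc m (fun t => g (t+1)) (fun t => p (t+1)) rest

theorem length_mc (m : ℕ) (g p : ℕ → ℕ) (T : Tab) : (mc m g p T).length = T.length := by
  induction m generalizing g p T with
  | zero => rfl
  | succ m ih =>
    cases T with
    | nil => rfl
    | cons r rest => simp [mc, ih]

theorem getD_mc (m : ℕ) (g p : ℕ → ℕ) (T : Tab) (t : ℕ) :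
    (mc m g p T).getD t [] =
      if t < m ∧ t < T.length then (T.getD t []).set (p t) (g t) else T.getD t [] := by
  induction m generalizing g p T t with
  | zero => simp [mc]
  | succ m ih =>
    cases T with
    | nil => simp [mc]
    | cons r rest =>
      cases t with
      | zero => simp [mc]
      | succ t =>
        rw [mc]
        simp only [List.getD_cons_succ, ih]
        by_cases h : t < m ∧ t < rest.length
        · rw [if_pos h, if_pos (by simp; omega)]
        · rw [if_neg h, if_neg (by simp; omega)]

theorem tab_ext {X Y : Tab} (hl : X.length = Y.length) (h : ∀ t, X.getD t [] = Y.getD t []) :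
    X = Y := by
  apply List.ext_getElem hl
  intro i h1 h2
  have := h i
  rwa [List.getD_eq_getElem _ _ h1, List.getD_eq_getElem _ _ h2] at this

theorem mc_congr {m : ℕ} {g p g' p' : ℕ → ℕ} {T : Tab}
    (hg : ∀ t < m, g t = g' t) (hp : ∀ t < m, p t = p' t) :
    mc m g p T = mc m g' p' T := by
  apply tab_ext (by rw [length_mc, length_mc])
  intro t
  rw [getD_mc, getD_mc]
  by_cases h : t < m ∧ t < T.length
  · rw [if_pos h, if_pos h, hg t h.1, hp t h.1]
  · rw [if_neg h, if_neg h]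

theorem mc_addAtRow {m ρ j : ℕ} {g p : ℕ → ℕ} {T : Tab}
    (hρ : ρ ≤ T.length)
    (h : m ≤ ρ ∨ p ρ < (T.getD ρ []).length) :
    mc m g p (addAtRow T ρ j) = addAtRow (mc m g p T) ρ j := by
  have hlen1 : (addAtRow T ρ j).length = if ρ < T.length then T.length else T.length + 1 :=
    length_addAtRow T ρ j hρ
  have hρ' : ρ ≤ (mc m g p T).length := by rwa [length_mc]
  apply tab_ext
  · rw [length_mc, hlen1, length_addAtRow _ _ _ hρ', length_mc]
  · intro t
    rw [getD_mc, getD_addAtRow _ _ _ _ hρ', getD_addAtRow _ _ _ _ hρ, getD_mc]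
    have hlen2 : t < (addAtRow T ρ j).length ↔ (t < T.length ∨ t = ρ) := by
      rw [hlen1]; by_cases hc : ρ < T.length
      · rw [if_pos hc]; omega
      · rw [if_neg hc]; omega
    by_cases ht : t = ρ
    · subst ht
      rw [if_pos rfl, if_pos rfl]
      by_cases h2 : t < m ∧ t < (addAtRow T t j).length
      · rcases h with h | h
        · omega
        · rw [if_pos h2]
          have htl : t < T.length := by
            rcases Nat.lt_or_ge t T.length with hc | hc
            · exact hc
            · exfalso
              rw [List.getD_eq_default _ _ hc] at h
              simp at h
          rw [if_pos ⟨h2.1, htl⟩, List.set_append, if_pos h]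
      · rw [if_neg h2, if_neg (by rw [hlen2] at h2; omega)]
    · rw [if_neg ht, if_neg ht, getD_mc]
      by_cases h2 : t < m ∧ t < T.length
      · rw [if_pos h2, if_pos (by rw [hlen2]; exact ⟨h2.1, Or.inl h2.2⟩)]
      · rw [if_neg h2, if_neg (by rw [hlen2]; intro hc; rcases hc.2 with hc2 | hc2; exact h2 ⟨hc.1, hc2⟩; exact ht hc2)]

theorem chain_lemma : ∀ (m : ℕ) (g p : ℕ → ℕ) (T : Tab),
    m ≤ T.length →
    (∀ t, t < m → g t < g (t+1)) →
    (∀ t, t < m → p t < (T.getD t []).length) →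
    (∀ t, t < m → (T.getD t []).getD (p t) 0 = g (t+1)) →
    (∀ t, t ≤ m → ∀ v ∈ (T.getD t []).take (p t), v ≤ g t) →
    (p m = (T.getD m []).length) →
    rsInsert T (g 0) = addAtRow (mc m g p T) m (g m) ∧ rsBumpRow T (g 0) = m := by
  intro m
  induction m with
  | zero =>
    intro g p T _ _ _ _ htake hlast
    have hall : ∀ v ∈ T.getD 0 [], v ≤ g 0 := by
      intro v hv
      exact htake 0 (le_refl _) v (by rwa [hlast, List.take_length])
    cases T with
    | nil => exact ⟨rfl, rfl⟩
    | cons r rest =>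
      have : insertRow r (g 0) = (r ++ [g 0], none) :=
        insertRow_of_le (fun v hv => hall v (by simpa using hv))
      rw [show mc 0 g p (r :: rest) = r :: rest from rfl, rsInsert_cons, rsBumpRow_cons, this,
        addAtRow_zero]
      simp
  | succ m ih =>
    intro g p T hm hmono hplen hval htake hlast
    cases T with
    | nil => simp at hm
    | cons r rest =>
      have hins : insertRow r (g 0) = (r.set (p 0) (g 0), some (g 1)) := by
        have := insertRow_spec (r := r) (x := g 0) (i := p 0)
          (by simpa using hplen 0 (by omega))
          (fun v hv => htake 0 (by omega) v (by simpa using hv))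
          (by rw [show (r.getD (p 0) 0) = g 1 from by simpa using hval 0 (by omega)]
              exact hmono 0 (by omega))
        rw [this, show (r.getD (p 0) 0) = g 1 from by simpa using hval 0 (by omega)]
      obtain ⟨ih1, ih2⟩ := ih (fun t => g (t+1)) (fun t => p (t+1)) rest
        (by simpa using hm)
        (fun t ht => hmono (t+1) (by omega))
        (fun t ht => by simpa using hplen (t+1) (by omega))
        (fun t ht => by simpa using hval (t+1) (by omega))
        (fun t ht v hv => htake (t+1) (by omega) v (by simpa using hv))
        (by simpa using hlast)
      constructor
      · rw [rsInsert_cons, hins]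
        simp only [Option.elim]
        rw [ih1, show mc (m+1) g p (r :: rest) =
          r.set (p 0) (g 0) :: mc m (fun t => g (t+1)) (fun t => p (t+1)) rest from rfl,
          addAtRow_cons_succ]
      · rw [rsBumpRow_cons, hins]
        simp only [Option.elim]
        rw [ih2]

theorem getD_append_len (l : List ℕ) (j : ℕ) : (l ++ [j]).getD l.length 0 = j := by
  simp [List.getD_eq_getElem?_getD]

theorem mem_getD_flatten {T : Tab} {t v : ℕ} (h : v ∈ T.getD t []) : v ∈ T.flatten := by
  rcases Nat.lt_or_ge t T.length with ht | ht
  · rw [List.getD_eq_getElem _ _ ht] at h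
    exact List.mem_flatten.2 ⟨_, List.getElem_mem _, h⟩
  · rw [List.getD_eq_default _ _ ht] at h; simp at h

theorem addAtRow_comm {X : Tab} {r s k k' : ℕ} (hrs : r ≠ s) (hr : r ≤ X.length)
    (hs : s ≤ X.length) :
    addAtRow (addAtRow X r k) s k' = addAtRow (addAtRow X s k') r k := by
  have l1 : (addAtRow X r k).length = if r < X.length then X.length else X.length + 1 :=
    length_addAtRow X r k hr
  have l2 : (addAtRow X s k').length = if s < X.length then X.length else X.length + 1 :=
    length_addAtRow X s k' hs
  have hs2 : s ≤ (addAtRow X r k).length := by rw [l1]; split <;> omega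
  have hr2 : r ≤ (addAtRow X s k').length := by rw [l2]; split <;> omega
  apply tab_ext
  · rw [length_addAtRow _ _ _ hs2, length_addAtRow _ _ _ hr2, l1, l2]
    split_ifs <;> omega
  · intro t
    rw [getD_addAtRow _ _ _ _ hs2, getD_addAtRow _ _ _ _ hr2]
    by_cases h1 : t = s
    · subst h1
      rw [if_pos rfl, if_neg (show ¬ t = r by omega), getD_addAtRow _ _ _ _ hr,
        if_neg (show ¬ t = r by omega), getD_addAtRow _ _ _ _ hs, if_pos rfl]
    · by_cases h2 : t = r
      · subst h2
        rw [if_neg h1, if_pos rfl, getD_addAtRow _ _ _ _ hr, if_pos rfl,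
          getD_addAtRow _ _ _ _ hs, if_neg h1]
      · rw [if_neg h1, if_neg h2, getD_addAtRow _ _ _ _ hr, if_neg h2,
          getD_addAtRow _ _ _ _ hs, if_neg h1]

theorem mc_hit {m j : ℕ} {g p : ℕ → ℕ} {Q : Tab} (hm : m ≤ Q.length)
    (hpm : p m = (Q.getD m []).length) :
    mc (m+1) g p (addAtRow Q m j) = addAtRow (mc m g p Q) m (g m) := by
  have hm2 : m ≤ (mc m g p Q).length := by rwa [length_mc]
  have l1 : (addAtRow Q m j).length = if m < Q.length then Q.length else Q.length + 1 :=
    length_addAtRow Q m j hm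
  have hm3 : m < (addAtRow Q m j).length := by rw [l1]; split <;> omega
  apply tab_ext
  · rw [length_mc, l1, length_addAtRow _ _ _ hm2, length_mc]
  · intro t
    rw [getD_mc, getD_addAtRow _ _ _ _ hm2]
    rcases Nat.lt_trichotomy t m with ht | ht | ht
    · rw [if_pos ⟨by omega, by omega⟩, if_neg (by omega), getD_addAtRow _ _ _ _ hm,
        if_neg (by omega), getD_mc, if_pos ⟨ht, by omega⟩]
    · subst ht
      rw [if_pos ⟨by omega, hm3⟩, if_pos rfl, getD_addAtRow _ _ _ _ hm, if_pos rfl, hpm,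
        List.set_append, if_neg (by omega), Nat.sub_self, getD_mc, if_neg (by omega)]
      rfl
    · rw [if_neg (by omega), if_neg (by omega), getD_addAtRow _ _ _ _ hm,
        if_neg (by omega), getD_mc, if_neg (by omega)]

/-- The joint process invariant: `(P, Q)` is the true RS state, `(P', Q')` the state of the
process with the pair `(a,b)` skipped; `b` sits at the end of row `m` of `P`, and `Q` differs
from `Q'` by relabeling along the chain of boxes `(t, p t)` plus one extra box. -/
structure Inv (b : ℕ) (P' Q' P Q : Tab) (m : ℕ) (g p : ℕ → ℕ) : Prop where
  h1 : P = addAtRow P' m b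
  h2 : m ≤ P'.length
  h3 : p m = (P'.getD m []).length
  h4 : Q = addAtRow (mc m g p Q') m (g m)
  h5 : ∀ t, t < m → g t < g (t+1)
  h6 : ∀ t, t < m → p t < (Q'.getD t []).length ∧ (Q'.getD t []).getD (p t) 0 = g (t+1)
  h7 : ∀ t, t ≤ m → ∀ v ∈ (Q'.getD t []).take (p t), v < g t
  h8 : ∀ v ∈ P'.flatten, v < b
  h9 : shape Q' = shape P'

theorem len_rsInsert_ge (T : Tab) (x : ℕ) : T.length ≤ (rsInsert T x).length := by
  rw [rsInsert_length]; split <;> omega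

theorem len_getD_rsInsert (T : Tab) (x t : ℕ) :
    ((rsInsert T x).getD t []).length = ((addAtRow T (rsBumpRow T x) 0).getD t []).length := by
  rw [len_getD, len_getD, shape_rsInsert]

theorem inv_step {b j x : ℕ} {P' Q' P Q : Tab} {m : ℕ} {g p : ℕ → ℕ}
    (inv : Inv b P' Q' P Q m g p) (hx : x < b)
    (hj : ∀ v ∈ Q'.flatten, v < j) (hgj : g m < j) :
    ∃ m' g' p',
      Inv b (rsInsert P' x) (addAtRow Q' (rsBumpRow P' x) j)
        (rsInsert P x) (addAtRow Q (rsBumpRow P x) j) m' g' p' ∧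
      g' 0 = g 0 ∧ (g' m' = g m ∨ g' m' = j) := by
  have hQP : Q'.length = P'.length := by
    rw [← shape_length, inv.h9, shape_length]
  have hρle : rsBumpRow P' x ≤ P'.length := rsBumpRow_le _ _
  have hρleQ : rsBumpRow P' x ≤ Q'.length := by omega
  have h2' := inv.h2
  have hmQ : m ≤ Q'.length := by omega
  have hpmQ : p m = (Q'.getD m []).length := by
    rw [getD_length_of_shape inv.h9]; exact inv.h3
  obtain ⟨mHit, mMiss⟩ := lemmaM (b := b) m P' x inv.h8 hx inv.h2
  by_cases hit : rsBumpRow P' x = m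
  · obtain ⟨e1, e2⟩ := mHit hit
    refine ⟨m+1, Function.update g (m+1) j,
      Function.update p (m+1) ((rsInsert P' x).getD (m+1) []).length, ?_, ?_, ?_⟩
    · have hg' : ∀ t, t ≤ m → Function.update g (m+1) j t = g t := by
        intro t ht; exact Function.update_of_ne (by omega) _ _
      have hp' : ∀ t, t ≤ m →
          Function.update p (m+1) ((rsInsert P' x).getD (m+1) []).length t = p t := by
        intro t ht; exact Function.update_of_ne (by omega) _ _
      have hbP : rsBumpRow P x = m + 1 := by rw [inv.h1]; exact e2
      constructor
      · rw [inv.h1, e1]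
      · rw [rsInsert_length]
        by_cases hc : rsBumpRow P' x = P'.length
        · rw [if_pos hc]; omega
        · rw [if_neg hc]; omega
      · rw [Function.update_self]
      · rw [hbP, inv.h4, hit, Function.update_self]
        rw [mc_congr (g' := g) (p' := p)
            (fun t ht => hg' t (by omega)) (fun t ht => hp' t (by omega)),
          mc_hit hmQ hpmQ]
      · intro t ht
        by_cases htm : t = m
        · subst htm
          rw [hg' t (le_refl _), Function.update_self]
          exact hgj
        · rw [hg' t (by omega), hg' (t+1) (by omega)]
          exact inv.h5 t (by omega)
      · intro t ht
        rw [hit, getD_addAtRow _ _ _ _ hmQ]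
        by_cases htm : t = m
        · subst htm
          rw [if_pos rfl, hp' t (le_refl _), Function.update_self, hpmQ]
          refine ⟨by simp, ?_⟩
          rw [getD_append_len]
        · rw [if_neg htm, hp' t (by omega), hg' (t+1) (by omega)]
          exact inv.h6 t (by omega)
      · intro t ht v hv
        rw [hit, getD_addAtRow _ _ _ _ hmQ] at hv
        by_cases htm1 : t = m + 1
        · subst htm1
          rw [Function.update_self]
          rw [if_neg (by omega)] at hv
          exact hj v (mem_getD_flatten (List.take_subset _ _ hv))
        · rw [hg' t (by omega)]
          by_cases htm : t = m
          · subst htm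
            rw [if_pos rfl, hp' t (by omega), hpmQ,
              List.take_append_of_le_length (le_refl _), List.take_length] at hv
            refine inv.h7 t (le_refl _) v ?_
            rw [hpmQ, List.take_length]
            exact hv
          · rw [if_neg htm, hp' t (by omega)] at hv
            exact inv.h7 t (by omega) v hv
      · intro v hv
        rcases mem_flatten_rsInsert hv with h | h
        · exact inv.h8 v h
        · omega
      · rw [shape_rsInsert]
        exact shape_addAtRow_congr inv.h9 _ _ _
    · exact Function.update_of_ne (by omega) _ _
    · right; exact Function.update_self _ _ _
  · obtain ⟨e1, e2⟩ := mMiss hit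
    have hbP : rsBumpRow P x = rsBumpRow P' x := by rw [inv.h1]; exact e2
    refine ⟨m, g, p, ?_, rfl, Or.inl rfl⟩
    constructor
    · rw [inv.h1, e1]
    · exact le_trans inv.h2 (len_rsInsert_ge _ _)
    · rw [len_getD_rsInsert, getD_addAtRow _ _ _ _ hρle, if_neg (by omega)]
      exact inv.h3
    · rw [hbP, inv.h4]
      rw [mc_addAtRow hρleQ ?side]
      case side =>
        rcases Nat.lt_or_ge (rsBumpRow P' x) m with hc | hc
        · exact Or.inr (inv.h6 _ hc).1
        · exact Or.inl hc
      rw [addAtRow_comm (by omega) (by rw [length_mc]; omega) (by rw [length_mc]; omega)]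
    · exact inv.h5
    · intro t ht
      rw [getD_addAtRow _ _ _ _ hρleQ]
      by_cases htρ : t = rsBumpRow P' x
      · rw [if_pos htρ, ← htρ]
        obtain ⟨o1, o2⟩ := inv.h6 t ht
        refine ⟨by simp only [List.length_append, List.length_singleton]; omega, ?_⟩
        rw [List.getD_append _ _ _ _ o1]
        exact o2
      · rw [if_neg htρ]
        exact inv.h6 t ht
    · intro t ht v hv
      rw [getD_addAtRow _ _ _ _ hρleQ] at hv
      by_cases htρ : t = rsBumpRow P' x
      · have htm : t < m := by omega
        rw [if_pos htρ, ← htρ,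
          List.take_append_of_le_length (le_of_lt (inv.h6 t htm).1)] at hv
        exact inv.h7 t ht v hv
      · rw [if_neg htρ] at hv
        exact inv.h7 t ht v hv
    · intro v hv
      rcases mem_flatten_rsInsert hv with h | h
      · exact inv.h8 v h
      · omega
    · rw [shape_rsInsert]
      exact shape_addAtRow_congr inv.h9 _ _ _

def RSstep (s : Tab × Tab) (q : ℕ × ℕ) : Tab × Tab :=
  (rsInsert s.1 q.2, addAtRow s.2 (rsBumpRow s.1 q.2) q.1)

theorem inv_fold {b : ℕ} : ∀ (rem : List (ℕ × ℕ)) (P' Q' P Q : Tab) (m : ℕ) (g p : ℕ → ℕ),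
    Inv b P' Q' P Q m g p →
    rem.Pairwise (fun q q' => q.1 < q'.1) →
    (∀ q ∈ rem, q.2 < b) →
    (∀ q ∈ rem, ∀ v ∈ Q'.flatten, v < q.1) →
    (∀ q ∈ rem, g m < q.1) →
    ∃ m' g' p', Inv b (rem.foldl RSstep (P', Q')).1 (rem.foldl RSstep (P', Q')).2
        (rem.foldl RSstep (P, Q)).1 (rem.foldl RSstep (P, Q)).2 m' g' p' ∧ g' 0 = g 0 := by
  intro rem
  induction rem with
  | nil => exact fun P' Q' P Q m g p inv _ _ _ _ => ⟨m, g, p, inv, rfl⟩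
  | cons q rem' ih =>
    intro P' Q' P Q m g p inv hsort hx hlab hg
    obtain ⟨j, x⟩ := q
    obtain ⟨m1, g1, p1, inv1, hg0, hgm⟩ :=
      inv_step inv (hx (j, x) (by simp)) (hlab (j, x) (by simp)) (hg (j, x) (by simp))
    have hpair : ∀ q' ∈ rem', j < q'.1 := by
      intro q' hq'
      exact (List.pairwise_cons.1 hsort).1 q' hq'
    obtain ⟨m', g', p', inv', hg0'⟩ := ih _ _ _ _ m1 g1 p1 inv1
      (List.pairwise_cons.1 hsort).2
      (fun q' hq' => hx q' (by simp [hq']))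
      (by
        intro q' hq' v hv
        rcases mem_flatten_addAtRow hv with h | h
        · exact hlab q' (by simp [hq']) v h
        · subst h; exact hpair q' hq')
      (by
        intro q' hq'
        rcases hgm with h | h
        · rw [h]; exact hg q' (by simp [hq'])
        · rw [h]; exact hpair q' hq')
    exact ⟨m', g', p', inv', by rw [hg0', hg0]⟩

theorem fold_shape : ∀ (l : List (ℕ × ℕ)) (s : Tab × Tab), shape s.2 = shape s.1 →
    shape (l.foldl RSstep s).2 = shape (l.foldl RSstep s).1 := by
  intro l
  induction l with
  | nil => exact fun s h => h
  | cons q l ih =>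
    intro s h
    refine ih _ ?_
    show shape (addAtRow s.2 (rsBumpRow s.1 q.2) q.1) = shape (rsInsert s.1 q.2)
    rw [shape_rsInsert]
    exact shape_addAtRow_congr h _ _ _

theorem fold_mem1 : ∀ (l : List (ℕ × ℕ)) (s : Tab × Tab) (v : ℕ),
    v ∈ (l.foldl RSstep s).1.flatten → v ∈ s.1.flatten ∨ ∃ q ∈ l, v = q.2 := by
  intro l
  induction l with
  | nil => exact fun s v h => Or.inl h
  | cons q l ih =>
    intro s v h
    rcases ih _ v h with h2 | h2
    · rcases mem_flatten_rsInsert h2 with h3 | h3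
      · exact Or.inl h3
      · exact Or.inr ⟨q, by simp, h3⟩
    · obtain ⟨q', hq', he⟩ := h2
      exact Or.inr ⟨q', by simp [hq'], he⟩

theorem fold_mem2 : ∀ (l : List (ℕ × ℕ)) (s : Tab × Tab) (v : ℕ),
    v ∈ (l.foldl RSstep s).2.flatten → v ∈ s.2.flatten ∨ ∃ q ∈ l, v = q.1 := by
  intro l
  induction l with
  | nil => exact fun s v h => Or.inl h
  | cons q l ih =>
    intro s v h
    rcases ih _ v h with h2 | h2
    · rcases mem_flatten_addAtRow h2 with h3 | h3
      · exact Or.inl h3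
      · exact Or.inr ⟨q, by simp, h3⟩
    · obtain ⟨q', hq', he⟩ := h2
      exact Or.inr ⟨q', by simp [hq'], he⟩

theorem mc_zero (g p : ℕ → ℕ) (T : Tab) : mc 0 g p T = T := by cases T <;> rfl

def bP (l : List (ℕ × ℕ)) : Tab :=
  ((l.filter (fun q => q.2 ≤ q.1)).map (fun q => (q.2, q.1))).foldl (fun T q => rBS T q.1 q.2) []

theorem main_aux : ∀ (N : ℕ) (l : List (ℕ × ℕ)), l.length ≤ N →
    l.Pairwise (fun q q' => q.1 < q'.1) →
    (∀ q ∈ l, (q.2, q.1) ∈ l) →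
    (l.foldl RSstep ([], [])).1 = (l.foldl RSstep ([], [])).2 ∧
    bP l = (l.foldl RSstep ([], [])).1 := by
  intro N
  induction N with
  | zero =>
    intro l hl _ _
    have : l = [] := List.length_eq_zero_iff.1 (by omega)
    subst this
    exact ⟨rfl, rfl⟩
  | succ N ihN =>
    intro l hl hsort hsym
    rcases List.eq_nil_or_concat l with rfl | ⟨L, e, rfl⟩
    · exact ⟨rfl, rfl⟩
    obtain ⟨c, a⟩ := e
    rw [List.concat_eq_append] at *
    obtain ⟨pL, -, hLc'⟩ := List.pairwise_append.1 hsort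
    have hLc : ∀ q ∈ L, q.1 < c := fun q hq => hLc' q hq (c, a) (by simp)
    have hacl : (a, c) ∈ L ++ [(c, a)] := hsym (c, a) (by simp)
    by_cases hac : a = c
    · -- fixed point case
      subst hac
      have hsymL : ∀ q ∈ L, (q.2, q.1) ∈ L := by
        intro q hq
        rcases List.mem_append.1 (hsym q (by simp [hq])) with h | h
        · exact h
        · exfalso
          simp at h
          have : q = (a, a) := by
            have := h.1; have := h.2
            rcases q with ⟨q1, q2⟩; simp_all
          subst this
          exact absurd (hLc _ hq) (lt_irrefl _)
      obtain ⟨E, B⟩ := ihN L (by simp at hl; omega) pL hsymL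
      have hP1 : ∀ v ∈ (L.foldl RSstep ([], [])).1.flatten, v < a := by
        intro v hv
        rcases fold_mem1 L ([], []) v hv with h | ⟨q, hq, rfl⟩
        · simp at h
        · rcases List.mem_append.1 (hsym q (by simp [hq])) with h2 | h2
          · exact hLc _ h2
          · exfalso
            simp at h2
            have : q = (a, a) := by rcases q with ⟨q1, q2⟩; simp_all
            subst this
            exact absurd (hLc _ hq) (lt_irrefl _)
      obtain ⟨i1, i2⟩ := rsInsert_max hP1
      have hfold : (L ++ [(a, a)]).foldl RSstep ([], []) = RSstep (L.foldl RSstep ([], [])) (a, a) := by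
        rw [List.foldl_append]; rfl
      have hbp : bP (L ++ [(a, a)]) = rBS (bP L) a a := by
        rw [bP, List.filter_append, List.map_append, List.foldl_append]
        simp [bP, rBS]
      constructor
      · rw [hfold]
        show rsInsert _ a = addAtRow _ (rsBumpRow _ a) a
        rw [i1, i2, E]
      · rw [hfold, hbp, B]
        show rBS _ a a = rsInsert _ a
        rw [rBS, if_pos rfl, i1]
    · -- true pair case
      have hacL : (a, c) ∈ L := by
        rcases List.mem_append.1 hacl with h | h
        · exact h
        · simp at h; omega
      have haltc : a < c := hLc _ hacL
      obtain ⟨l₀, l₂, rfl⟩ := List.append_of_mem hacL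
      -- pairwise data
      obtain ⟨p₀, pa₂, cross⟩ := List.pairwise_append.1 pL
      have p₂ := (List.pairwise_cons.1 pa₂).2
      have hal₂ : ∀ q ∈ l₂, a < q.1 := (List.pairwise_cons.1 pa₂).1
      have h0a : ∀ q ∈ l₀, q.1 < a := fun q hq => cross q hq (a, c) (by simp)
      have h0c : ∀ q ∈ l₀, q.1 < c := fun q hq => hLc q (by simp [hq])
      have h2c : ∀ q ∈ l₂, q.1 < c := fun q hq => hLc q (by simp [hq])
      -- the reduced list
      have hsym' : ∀ q ∈ l₀ ++ l₂, (q.2, q.1) ∈ l₀ ++ l₂ := by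
        intro q hq
        have hq1 : q.1 ≠ a ∧ q.1 ≠ c := by
          rcases List.mem_append.1 hq with h | h
          · have := h0a q h; have := h0c q h; omega
          · have := hal₂ q h; have := h2c q h; omega
        have hmem : (q.2, q.1) ∈ (l₀ ++ (a, c) :: l₂) ++ [(c, a)] :=
          hsym q (by rcases List.mem_append.1 hq with h | h <;> simp [h])
        rcases List.mem_append.1 hmem with h | h
        · rcases List.mem_append.1 h with h2 | h2
          · exact List.mem_append.2 (Or.inl h2)
          · rcases List.mem_cons.1 h2 with h3 | h3
            · exfalso
              have : q = (c, a) := by rcases q with ⟨q1, q2⟩; simp_all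
              subst this
              exact hq1.2 rfl
            · exact List.mem_append.2 (Or.inr h3)
        · exfalso
          simp at h
          have : q = (a, c) := by rcases q with ⟨q1, q2⟩; simp_all
          subst this
          exact hq1.1 rfl
      have hsort' : (l₀ ++ l₂).Pairwise (fun q q' => q.1 < q'.1) := by
        rw [List.pairwise_append]
        exact ⟨p₀, p₂, fun q hq q' hq' => lt_trans (h0a q hq) (hal₂ q' hq')⟩
      have hlen' : (l₀ ++ l₂).length ≤ N := by
        simp only [List.length_append, List.length_cons, List.length_singleton] at hl ⊢
        omega
      obtain ⟨E, B⟩ := ihN _ hlen' hsort' hsym'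
      -- snd values of L are < c
      have hsndL : ∀ q ∈ l₀ ++ (a, c) :: l₂, q ≠ (a, c) → q.2 < c := by
        intro q hq hne
        rcases List.mem_append.1 (hsym q (by simp at hq ⊢; tauto)) with h | h
        · exact hLc _ h
        · exfalso
          simp at h
          exact hne (by rcases q with ⟨q1, q2⟩; simp_all)
      -- states
      set s₀ := l₀.foldl RSstep ([], []) with hs₀
      have hP0 : ∀ v ∈ s₀.1.flatten, v < c := by
        intro v hv
        rcases fold_mem1 l₀ ([], []) v hv with h | ⟨q, hq, rfl⟩
        · simp at h
        · refine hsndL q (by simp [hq]) (fun he => ?_)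
          have := h0a _ hq
          rw [he] at this
          exact absurd this (lt_irrefl _)
      have hQ0 : ∀ v ∈ s₀.2.flatten, v < a := by
        intro v hv
        rcases fold_mem2 l₀ ([], []) v hv with h | ⟨q, hq, rfl⟩
        · simp at h
        · exact h0a q hq
      have hsh0 : shape s₀.2 = shape s₀.1 := fold_shape l₀ ([], []) rfl
      obtain ⟨i1, i2⟩ := rsInsert_max hP0
      -- initial invariant after processing (a, c)
      have inv₀ : Inv c s₀.1 s₀.2 (rsInsert s₀.1 c) (addAtRow s₀.2 (rsBumpRow s₀.1 c) a) 0
          (fun _ => a) (fun _ => (s₀.1.getD 0 []).length) := by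
        constructor
        · exact i1
        · exact Nat.zero_le _
        · rfl
        · rw [i2, mc_zero]
        · intro t ht; omega
        · intro t ht; omega
        · intro t _ v hv
          exact hQ0 v (mem_getD_flatten (List.take_subset _ _ hv))
        · exact hP0
        · exact hsh0
      obtain ⟨m, g, p, invF, hg0⟩ := inv_fold l₂ s₀.1 s₀.2 _ _ 0
        (fun _ => a) (fun _ => (s₀.1.getD 0 []).length) inv₀ p₂
        (fun q hq => hsndL q (by simp [hq]) (fun he => by
          have := hal₂ _ hq
          rw [he] at this
          exact absurd this (lt_irrefl _)))
        (fun q hq v hv => lt_trans (hQ0 v hv) (hal₂ q hq))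
        (fun q hq => hal₂ q hq)
      -- identify states
      have hsF : l₂.foldl RSstep (s₀.1, s₀.2) = (l₀ ++ l₂).foldl RSstep ([], []) := by
        rw [List.foldl_append]
      rw [hsF] at invF
      set sF := (l₀ ++ l₂).foldl RSstep ([], []) with hsFdef
      set sR := l₂.foldl RSstep (rsInsert s₀.1 c, addAtRow s₀.2 (rsBumpRow s₀.1 c) a) with hsR
      -- chain lemma on sF.1
      have hg0a : g 0 = a := hg0
      obtain ⟨c1, c2⟩ := chain_lemma m g p sF.1 invF.h2 invF.h5
        (fun t ht => by have := (invF.h6 t ht).1; rwa [← E] at this)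
        (fun t ht => by have := (invF.h6 t ht).2; rwa [← E] at this)
        (fun t ht v hv => le_of_lt (invF.h7 t ht v (by rwa [E] at hv)))
        invF.h3
      rw [hg0a] at c1 c2
      obtain ⟨mHit, -⟩ := lemmaM (b := c) m sF.1 a invF.h8 haltc invF.h2
      obtain ⟨e1, e2⟩ := mHit c2
      -- final step
      have hfold : ((l₀ ++ (a, c) :: l₂) ++ [(c, a)]).foldl RSstep ([], []) = RSstep sR (c, a) := by
        rw [List.foldl_append, List.foldl_append, List.foldl_cons]
        rfl
      have hfin1 : (RSstep sR (c, a)).1 = addAtRow (addAtRow (mc m g p sF.1) m (g m)) (m+1) c := by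
        show rsInsert sR.1 a = _
        rw [invF.h1, e1, c1]
      have hbump : rsBumpRow sR.1 a = m + 1 := by rw [invF.h1]; exact e2
      have hfin2 : (RSstep sR (c, a)).2 = addAtRow (addAtRow (mc m g p sF.2) m (g m)) (m+1) c := by
        show addAtRow sR.2 (rsBumpRow sR.1 a) c = _
        rw [hbump, invF.h4]
      have hbp : bP ((l₀ ++ (a, c) :: l₂) ++ [(c, a)]) = rBS (bP (l₀ ++ l₂)) a c := by
        rw [bP, bP]
        simp only [List.filter_append, List.map_append, List.foldl_append, List.filter_cons]
        rw [if_neg (by simp; omega), if_pos (by simp; omega)]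
        simp
      constructor
      · rw [hfold, hfin1, hfin2, E]
      · rw [hfold, hfin1, hbp, B, rBS, if_neg hac, c2, c1]

theorem fold_fst : ∀ (l : List (ℕ × ℕ)) (s : Tab × Tab),
    (l.foldl RSstep s).1 = (l.map Prod.snd).foldl rsInsert s.1 := by
  intro l
  induction l with
  | nil => intro s; rfl
  | cons q l ih => intro s; rw [List.map_cons, List.foldl_cons, List.foldl_cons, ih]; rfl

end Aux

/-- row Beissinger insertion computes the RS tableau of an involution. -/
theorem prbs_eq_prs (n : ℕ) (z : Equiv.Perm (Fin n)) (hz : z * z = 1) :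
    PrBS z = PRS (wordOf z) ∧ PRS (wordOf z) = QRS (wordOf z) := by
  set w := permFn z with hw
  set l : List (ℕ × ℕ) := (List.range n).map (fun i => (i + 1, w i + 1)) with hldef
  have hzz : ∀ x : Fin n, z (z x) = x := by
    intro x
    have : (z * z) x = (1 : Equiv.Perm (Fin n)) x := by rw [hz]
    simpa using this
  have hwlt : ∀ i, i < n → w i < n := by
    intro i hi
    simp only [hw, permFn, dif_pos hi]
    exact (z ⟨i, hi⟩).isLt
  have hww : ∀ i, i < n → w (w i) = i := by
    intro i hi
    simp only [hw, permFn, dif_pos hi]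
    rw [dif_pos (z ⟨i, hi⟩).isLt, Fin.eta, hzz]
  have hsort : l.Pairwise (fun q q' => q.1 < q'.1) := by
    rw [hldef]
    refine List.Pairwise.map _ (fun i j h => ?_) (List.pairwise_lt_range (n := n))
    simpa using h
  have hsym : ∀ q ∈ l, (q.2, q.1) ∈ l := by
    intro q hq
    rw [hldef] at hq ⊢
    obtain ⟨i, hi, rfl⟩ := List.mem_map.1 hq
    rw [List.mem_range] at hi
    refine List.mem_map.2 ⟨w i, List.mem_range.2 (hwlt i hi), ?_⟩
    simp [hww i hi]
  obtain ⟨E, B⟩ := main_aux l.length l (le_refl _) hsort hsym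
  -- identify the P side
  have hword : wordOf z = l.map Prod.snd := by
    rw [wordOf, wordFn, hldef, List.map_map]
    rfl
  have hP : (l.foldl RSstep ([], [])).1 = PRS (wordOf z) := by
    rw [fold_fst, PRS, hword]
  -- identify the Q side
  have hQ : (l.foldl RSstep ([], [])).2 = QRS (wordOf z) := by
    have hword2 : wordOf z = (List.range n).map (fun i => w i + 1) := rfl
    have henum : ((wordOf z).zipIdx.map Prod.swap).map (fun ix => (ix.1 + 1, ix.2)) = l := by
      rw [hword2, hldef]
      apply List.ext_getElem (by simp)
      intro i h1 h2
      simp [List.getElem_zipIdx]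
    have : RSpair (wordOf z) = l.foldl RSstep ([], []) := by
      simp only [RSpair, ← henum, List.foldl_map]
      rfl
    rw [QRS, this]
  -- identify the Beissinger side
  have hB : PrBS z = bP l := by
    rw [PrBS, PrBSfn, bP, hldef, List.filter_map]
    have hpred : ((fun q : ℕ × ℕ => decide (q.2 ≤ q.1)) ∘ fun i => (i + 1, w i + 1)) =
        (fun b => decide (w b ≤ b)) := by
      funext i
      simp [Nat.add_le_add_iff_right]
    rw [hpred, List.map_map, invPairsFn]
    rfl
  refine ⟨?_, ?_⟩
  · rw [hB, B, hP]
  · rw [← hP, E, hQ]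

end GelfandRSK
end

section
/- Transpose intertwines the two variants of column Beissinger insertion: for any partially standard tableau T and integers a ≤ b, (T ←cBS (a,b))^⊤ = T^⊤ ⇐cBS (a,b), where ⇐cBS uses Schensted column insertion of a and adds b at the end of the next row. -/
namespace GelfandRSK

def colOf (T : List (List ℕ)) (c : ℕ) : List ℕ := T.filterMap (fun r => r[c]?)

lemma colOf_eq (T : List (List ℕ)) (c : ℕ) :
    colOf T c = (T.filter (fun r => decide (c < r.length))).map (fun r => r.getD c 0) := by
  induction T with
  | nil => rfl
  | cons r rest ih =>
    by_cases h : c < r.length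
    · rw [colOf, List.filterMap_cons_some (f := fun r => r[c]?) (a := r) (l := rest)
        (show r[c]? = some (r.getD c 0) by
          rw [List.getD_eq_getElem _ _ h]; exact List.getElem?_eq_getElem h)]
      rw [List.filter_cons_of_pos (by simpa using h), List.map_cons, ← ih]; rfl
    · rw [colOf, List.filterMap_cons_none (f := fun r => r[c]?) (a := r) (l := rest)
        (List.getElem?_eq_none (show r.length ≤ c by omega))]
      rw [List.filter_cons_of_neg (by simpa using h), ← ih]; rfl

lemma pairwise_len {T : List (List ℕ)}
    (h : T.Chain' (fun r₁ r₂ : List ℕ => r₂.length ≤ r₁.length)) :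
    T.Pairwise (fun r₁ r₂ => r₂.length ≤ r₁.length) := by
  haveI : IsTrans (List ℕ) (fun r₁ r₂ : List ℕ => r₂.length ≤ r₁.length) :=
    ⟨fun _ _ _ h1 h2 => le_trans h2 h1⟩
  exact List.isChain_iff_pairwise.mp h

lemma colOf_getElem? {T : List (List ℕ)}
    (hp : T.Pairwise (fun r₁ r₂ => r₂.length ≤ r₁.length)) (c : ℕ) :
    ∀ i, i < T.length →
      (colOf T c)[i]? =
        if c < (T.getD i []).length then some ((T.getD i []).getD c 0) else none := by
  induction T with
  | nil => intro i hi; simp at hi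
  | cons r rest ih =>
    rw [List.pairwise_cons] at hp
    intro i hi
    by_cases h : c < r.length
    · rw [colOf, List.filterMap_cons_some (f := fun r => r[c]?) (a := r) (l := rest)
        (show r[c]? = some (r.getD c 0) by
          rw [List.getD_eq_getElem _ _ h]; exact List.getElem?_eq_getElem h)]
      cases i with
      | zero => simp [h]
      | succ i =>
        rw [List.getElem?_cons_succ, List.getD_cons_succ]
        exact ih hp.2 i (by simpa using hi)
    · have hres : ∀ r' ∈ rest, ¬ (c < r'.length) := fun r' hr' => by
        have := hp.1 r' hr'; omega
      have hnil : colOf (r :: rest) c = [] := by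
        rw [colOf_eq]
        rw [List.filter_eq_nil_iff.mpr (by
          intro a ha
          simp only [decide_eq_true_eq]
          rcases List.mem_cons.mp ha with rfl | ha
          · exact h
          · exact hres a ha)]
        rfl
      have hlen : ¬ c < ((r :: rest).getD i []).length := by
        cases i with
        | zero => simpa using h
        | succ i =>
          rw [List.getD_cons_succ]
          have hi' : i < rest.length := by simpa using hi
          have hm : rest.getD i [] ∈ rest := by
            rw [List.getD_eq_getElem _ _ hi']; exact List.getElem_mem hi'
          exact hres _ hm
      rw [hnil, if_neg hlen]; simp

lemma filterMap_range_if {β : Type*} (f : ℕ → β) {L n : ℕ} (h : L ≤ n) :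
    (List.range n).filterMap (fun c => if c < L then some (f c) else none)
      = (List.range L).map f := by
  obtain ⟨m, rfl⟩ := Nat.exists_eq_add_of_le h
  rw [List.range_add, List.filterMap_append]
  have h1 : (List.range L).filterMap (fun c => if c < L then some (f c) else none)
      = (List.range L).map f := by
    rw [List.filterMap_congr (g := some ∘ f) (by
      intro a ha; simp [List.mem_range.mp ha])]
    exact congrFun (List.filterMap_eq_map (f := f)) _
  have h2 : ((List.range m).map (fun x => L + x)).filterMap
      (fun c => if c < L then some (f c) else none) = [] := by
    rw [List.filterMap_map]
    rw [List.filterMap_congr (g := fun _ => none) (by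
      intro a ha; simp [Function.comp])]
    simp
  rw [h1, h2, List.append_nil]

lemma map_getD_range (r : List ℕ) :
    (List.range r.length).map (fun c => r.getD c 0) = r := by
  apply List.ext_getElem (by simp)
  intro n h1 h2
  simp only [List.getElem_map, List.getElem_range]
  rw [List.getD_eq_getElem _ _ h2]

lemma filterMap_set {α β : Type*} (f : α → Option β) (l : List α) (i : ℕ) (v : α)
    (hi : i < l.length) (hfv : f v = f (l[i]'hi)) :
    (l.set i v).filterMap f = l.filterMap f := by
  have hl : l = l.take i ++ l[i] :: l.drop (i + 1) := by
    conv_lhs => rw [← List.take_append_drop i l]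
    rw [List.getElem_cons_drop hi]
  have hset : l.set i v = l.take i ++ v :: l.drop (i + 1) := by
    conv_lhs => rw [hl]
    rw [List.set_append]
    simp only [List.length_take, Nat.min_eq_left (le_of_lt hi), Nat.sub_self,
      if_neg (lt_irrefl i)]
    rw [List.set_cons_zero]
  rw [hset]
  conv_rhs => rw [hl]
  rw [List.filterMap_append, List.filterMap_append, List.filterMap_cons, List.filterMap_cons, hfv]

lemma transposeT_def (T : List (List ℕ)) :
    transposeT T = (List.range (T.headD []).length).map (colOf T) := rfl

lemma length_transposeT (T : List (List ℕ)) :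
    (transposeT T).length = (T.headD []).length := by
  rw [transposeT_def]; simp

lemma getElem?_transposeT (T : List (List ℕ)) (c : ℕ) (h : c < (T.headD []).length) :
    (transposeT T)[c]? = some (colOf T c) := by
  rw [transposeT_def, List.getElem?_map, List.getElem?_range h]; rfl

lemma transposeT_transposeT {T : List (List ℕ)} (h1 : ∀ r ∈ T, r ≠ [])
    (hp : T.Pairwise (fun r₁ r₂ => r₂.length ≤ r₁.length)) :
    transposeT (transposeT T) = T := by
  rcases T with _ | ⟨r0, rest⟩
  · rfl
  have hnc : 0 < r0.length := List.length_pos_iff.mpr (h1 r0 (by simp))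
  have hlen0 : (colOf (r0 :: rest) 0).length = (r0 :: rest).length := by
    rw [colOf_eq, List.length_map, List.filter_eq_self.mpr ?_]
    intro a ha
    simpa using List.length_pos_iff.mpr (h1 a ha)
  have hhead : (transposeT (r0 :: rest)).headD [] = colOf (r0 :: rest) 0 := by
    rw [transposeT_def]
    obtain ⟨m, hm⟩ : ∃ m, ((r0 :: rest).headD []).length = m + 1 :=
      ⟨r0.length - 1, by simp only [List.headD_cons]; omega⟩
    rw [hm, List.range_succ_eq_map, List.map_cons, List.headD_cons]
  have houter : transposeT (transposeT (r0 :: rest)) =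
      (List.range (r0 :: rest).length).map (colOf (transposeT (r0 :: rest))) := by
    rw [transposeT_def (transposeT (r0 :: rest)), hhead, hlen0]
  rw [houter]
  apply List.ext_getElem?
  intro i
  rw [List.getElem?_map]
  by_cases hi : i < (r0 :: rest).length
  · rw [List.getElem?_range hi, Option.map_some, List.getElem?_eq_getElem hi]
    congr 1
    have hL : ((r0 :: rest).getD i []).length ≤ r0.length := by
      rcases Nat.eq_zero_or_pos i with rfl | hposi
      · simp
      · have := (List.pairwise_iff_getElem.mp hp) 0 i (by simp) hi hposi
        rw [List.getD_eq_getElem _ _ hi]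
        simpa using this
    rw [transposeT_def, colOf, List.filterMap_map]
    rw [List.filterMap_congr (f := (fun r => r[i]?) ∘ colOf (r0 :: rest)) (g := fun c =>
        if c < ((r0 :: rest).getD i []).length
        then some (((r0 :: rest).getD i []).getD c 0) else none)
      (fun c _ => colOf_getElem? hp c i hi)]
    simp only [List.headD_cons]
    rw [filterMap_range_if _ hL, map_getD_range]
    rw [List.getD_eq_getElem _ _ hi]
  · rw [List.getElem?_eq_none (by simpa using Nat.le_of_not_lt hi), Option.map_none,
      List.getElem?_eq_none (Nat.le_of_not_lt hi)]

lemma eq_take_cons_drop {α : Type*} (l : List α) (i : ℕ) (hi : i < l.length) :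
    l = l.take i ++ l[i] :: l.drop (i + 1) := by
  conv_lhs => rw [← List.take_append_drop i l]
  rw [List.getElem_cons_drop hi]

lemma set_eq_take_cons_drop {α : Type*} (l : List α) (i : ℕ) (v : α) (hi : i < l.length) :
    l.set i v = l.take i ++ v :: l.drop (i + 1) := by
  conv_lhs => rw [eq_take_cons_drop l i hi]
  rw [List.set_append]
  simp only [List.length_take, Nat.min_eq_left (le_of_lt hi), Nat.sub_self,
    if_neg (lt_irrefl i)]
  rw [List.set_cons_zero]

lemma transposeT_addAtCol (T : List (List ℕ)) (c k : ℕ)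
    (h1 : ∀ r ∈ T, r ≠ [])
    (hp : T.Pairwise (fun r₁ r₂ => r₂.length ≤ r₁.length))
    (hc : ∀ h : T.findIdx (fun r => decide (r.length ≤ c)) < T.length,
        c ≤ (T[T.findIdx (fun r => decide (r.length ≤ c))]'h).length)
    (hc0 : T.findIdx (fun r => decide (r.length ≤ c)) = T.length → c = 0) :
    transposeT (addAtCol T c k) = addAtRow (transposeT T) c k := by
  rcases Nat.lt_or_ge (T.findIdx (fun r => decide (r.length ≤ c))) T.length with hlt | hge
  · -- fi < T.length
    have hcfi : (T[T.findIdx (fun r => decide (r.length ≤ c))]'hlt).length = c := by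
      have h1' := List.findIdx_getElem (w := hlt)
      simp only [decide_eq_true_eq] at h1'
      exact le_antisymm h1' (hc hlt)
    have hbefore : ∀ i (h : i < T.length), i < T.findIdx (fun r => decide (r.length ≤ c)) →
        c < (T[i]'h).length := by
      intro i h hi
      have h2 := List.not_of_lt_findIdx hi
      simp only [decide_eq_false_iff_not] at h2
      omega
    rcases T with _ | ⟨r0, rest⟩
    · simp at hlt
    have haddc : addAtCol (r0::rest) c k =
        (r0::rest).set ((r0::rest).findIdx (fun r => decide (r.length ≤ c)))
          (((r0::rest)[(r0::rest).findIdx (fun r => decide (r.length ≤ c))]'hlt) ++ [k]) := by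
      rw [addAtCol, addAtRow, if_pos hlt, List.getD_eq_getElem _ _ hlt]
    set fi := ((r0::rest).findIdx (fun r => decide (r.length ≤ c))) with hfidef
    set v : List ℕ := ((r0::rest)[fi]'hlt) with hvdef
    have hvc : v.length = c := hcfi
    rcases Nat.eq_zero_or_pos fi with hfi0 | hfipos
    · -- fi = 0
      have hv0 : v = r0 := by rw [hvdef]; simp [hfi0]
      have hc0' : r0.length = c := by rw [← hv0]; exact hvc
      have hset : (r0::rest).set fi (v ++ [k]) = (r0 ++ [k]) :: rest := by
        rw [hfi0, hv0, List.set_cons_zero]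
      rw [haddc, hset]
      have hrest : ∀ r ∈ rest, r.length ≤ c := by
        intro r hr
        have := (List.pairwise_cons.mp hp).1 r hr
        omega
      rw [transposeT_def]
      simp only [List.headD_cons, List.length_append, List.length_singleton]
      rw [hc0', List.range_succ, List.map_append]
      have hlenT : (transposeT (r0::rest)).length = c := by
        rw [length_transposeT]; simpa using hc0'
      rw [addAtRow, if_neg (by rw [hlenT]; exact lt_irrefl c), transposeT_def]
      simp only [List.headD_cons, hc0']
      congr 1
      · apply List.map_congr_left
        intro c' hc'
        have hc'' : c' < c := List.mem_range.mp hc'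
        rw [colOf, colOf, List.filterMap_cons, List.filterMap_cons,
          List.getElem?_append_left (by omega)]
      · simp only [List.map_cons, List.map_nil]
        congr 1
        rw [colOf, List.filterMap_cons_some (f := fun r => r[c]?) (a := r0 ++ [k]) (l := rest)
          (show (r0 ++ [k])[c]? = some k by rw [← hc0']; exact List.getElem?_concat_length)]
        rw [List.filterMap_eq_nil_iff.mpr (by
          intro r hr; exact List.getElem?_eq_none (hrest r hr))]
    · -- fi = fj + 1
      obtain ⟨fj, hfj⟩ : ∃ fj, fi = fj + 1 := ⟨fi - 1, by omega⟩
      have hcr0 : c < r0.length := by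
        have := hbefore 0 (by simp) (by omega)
        simpa using this
      rw [haddc]
      have hlenT : (transposeT (r0::rest)).length = r0.length := by
        rw [length_transposeT]; simp
      rw [addAtRow, if_pos (by rw [hlenT]; exact hcr0)]
      have hgd : (transposeT (r0::rest)).getD c [] = colOf (r0::rest) c := by
        rw [List.getD_eq_getElem?_getD, getElem?_transposeT _ _ (by simpa using hcr0)]; rfl
      rw [hgd]
      have hheadset : ((r0::rest).set fi (v ++ [k])).headD [] = r0 := by
        rw [hfj, List.set_cons_succ]; rfl
      rw [transposeT_def, hheadset]
      have hdropnil : ∀ (L : List (List ℕ)), (∀ r ∈ L, r.length ≤ c) →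
          L.filterMap (fun r => r[c]?) = [] := fun L hL =>
        List.filterMap_eq_nil_iff.mpr (fun r hr => List.getElem?_eq_none (hL r hr))
      have hdrople : ∀ r ∈ (r0::rest).drop (fi+1), r.length ≤ c := by
        intro r hr
        obtain ⟨t, ht, rfl⟩ := List.mem_iff_getElem.mp hr
        rw [List.getElem_drop]
        have hidx : fi + 1 + t < (r0::rest).length := by
          rw [List.length_drop] at ht; omega
        have hpw := (List.pairwise_iff_getElem.mp hp) fi (fi+1+t) hlt hidx (by omega)
        rw [← hvdef] at hpw
        omega
      apply List.ext_getElem?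
      intro c'
      rw [List.getElem?_map, List.getElem?_set]
      by_cases hc' : c' < r0.length
      · rw [List.getElem?_range hc', Option.map_some]
        by_cases hcc : c = c'
        · subst hcc
          rw [if_pos rfl, if_pos (by rw [hlenT]; exact hcr0)]
          congr 1
          have e1 : colOf ((r0::rest).set fi (v ++ [k])) c
              = ((r0::rest).take fi).filterMap (fun r => r[c]?) ++ [k] := by
            rw [colOf, set_eq_take_cons_drop _ _ _ hlt, List.filterMap_append,
              List.filterMap_cons_some (f := fun r => r[c]?) (a := v ++ [k])
                (l := (r0::rest).drop (fi+1))
                (show (v ++ [k])[c]? = some k by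
                  rw [← hvc]; exact List.getElem?_concat_length),
              hdropnil _ hdrople]
          have e2 : colOf (r0::rest) c = ((r0::rest).take fi).filterMap (fun r => r[c]?) := by
            conv_lhs => rw [colOf, eq_take_cons_drop (r0::rest) fi hlt]
            rw [List.filterMap_append,
              List.filterMap_cons_none (f := fun r => r[c]?)
                (a := (r0::rest)[fi]'hlt) (l := (r0::rest).drop (fi+1))
                (List.getElem?_eq_none (by rw [← hvdef, hvc])),
              hdropnil _ hdrople, List.append_nil]
          rw [e1, e2]
        · rw [if_neg hcc, getElem?_transposeT _ _ (by simpa using hc')]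
          congr 1
          exact filterMap_set (fun r => r[c']?) (r0::rest) fi (v ++ [k]) hlt (by
            rw [← hvdef]
            show (v ++ [k])[c']? = v[c']?
            rcases Nat.lt_or_ge c' c with h' | h'
            · exact List.getElem?_append_left (by rw [hvc]; exact h')
            · rw [List.getElem?_eq_none (by simp only [List.length_append,
                  List.length_singleton, hvc]; omega),
                List.getElem?_eq_none (by rw [hvc]; omega)])
      · rw [List.getElem?_eq_none (by simpa using Nat.le_of_not_lt hc'), Option.map_none,
          if_neg (by omega), List.getElem?_eq_none (by rw [hlenT]; exact Nat.le_of_not_lt hc')]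
  · have hfil : T.findIdx (fun r => decide (r.length ≤ c)) = T.length :=
      le_antisymm List.findIdx_le_length hge
    have hcz := hc0 hfil; subst hcz
    have haddc : addAtCol T 0 k = T ++ [[k]] := by
      rw [addAtCol, hfil, addAtRow, if_neg (lt_irrefl _)]
    rw [haddc]
    rcases T with _ | ⟨r0, rest⟩
    · show transposeT [[k]] = addAtRow (transposeT []) 0 k
      rw [transposeT_def, transposeT_def]
      simp only [List.headD_cons, List.length_singleton, List.headD_nil, List.length_nil]
      rw [show List.range 1 = [0] from by simp [List.range_succ]]
      simp [addAtRow, colOf]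
    · have hnc : 0 < r0.length := List.length_pos_iff.mpr (h1 r0 (by simp))
      rw [transposeT_def]
      simp only [List.cons_append, List.headD_cons]
      rw [addAtRow, if_pos (by rw [length_transposeT]; simpa using hnc)]
      have hgd : (transposeT (r0::rest)).getD 0 [] = colOf (r0::rest) 0 := by
        rw [List.getD_eq_getElem?_getD, getElem?_transposeT _ _ (by simpa using hnc)]; rfl
      rw [hgd]
      apply List.ext_getElem?
      intro c'
      rw [List.getElem?_map, List.getElem?_set]
      have hcol : colOf (r0 :: (rest ++ [[k]])) c'
          = colOf (r0 :: rest) c' ++ (if c' = 0 then [k] else []) := by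
        rw [← List.cons_append, colOf, colOf, List.filterMap_append]
        congr 1
        rcases Nat.eq_zero_or_pos c' with rfl | hpos
        · simp
        · rw [if_neg (by omega)]
          exact List.filterMap_eq_nil_iff.mpr (by
            intro r hr
            rcases List.mem_singleton.mp hr with rfl
            exact List.getElem?_eq_none (by simp only [List.length_singleton]; omega))
      by_cases hc' : c' < r0.length
      · rw [List.getElem?_range hc', Option.map_some, hcol]
        rcases Nat.eq_zero_or_pos c' with rfl | hpos
        · rw [if_pos rfl, if_pos rfl, if_pos (by rw [length_transposeT]; simpa using hnc)]
        · rw [if_neg (by omega), if_neg (by omega), List.append_nil,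
            getElem?_transposeT _ _ (by simpa using hc')]
      · rw [List.getElem?_eq_none (by simpa using Nat.le_of_not_lt hc'), Option.map_none,
          if_neg (by omega),
          List.getElem?_eq_none (by rw [length_transposeT]; simpa using Nat.le_of_not_lt hc')]

lemma colStrict_tail {r : List ℕ} {rest : List (List ℕ)} (h : colStrict (r :: rest)) :
    colStrict rest := by
  intro i c hi hc
  have := h (i+1) c (by simpa using hi) (by simpa using hc)
  simpa using this

lemma rsInsert_spec (x : ℕ) (T : List (List ℕ))
    (h1 : ∀ r ∈ T, r ≠ [])
    (h2 : T.Chain' (fun r₁ r₂ : List ℕ => r₂.length ≤ r₁.length))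
    (h3 : colStrict T) :
    rsBumpRow T x ≤ T.length ∧
    (rsInsert T x).map List.length =
      (if rsBumpRow T x < T.length
        then (T.map List.length).set (rsBumpRow T x) (rsBumpCol T x + 1)
        else T.map List.length ++ [1]) ∧
    (∀ m, m < rsBumpRow T x → rsBumpCol T x + 1 ≤ (T.getD m []).length) := by
  induction T generalizing x with
  | nil =>
    refine ⟨Nat.le_refl 0, ?_, by intro m hm; simp [rsBumpRow] at hm⟩
    simp [rsInsert, rsBumpRow, rsBumpCol]
  | cons r rest ih =>
    cases hf : r.findIdx? (fun y => decide (x < y)) with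
    | none =>
      have hIns : rsInsert (r::rest) x = (r ++ [x]) :: rest := by
        simp only [rsInsert, insertRow, hf]
      have hBR : rsBumpRow (r::rest) x = 0 := by
        simp only [rsBumpRow, insertRow, hf]
      have hBC : rsBumpCol (r::rest) x = r.length := by
        rw [rsBumpCol, hBR]; rfl
      refine ⟨by omega, ?_, by intro m hm; omega⟩
      rw [hIns, hBR, hBC, if_pos (by simp)]
      simp
    | some i =>
      obtain ⟨hi, px, hbef⟩ := List.findIdx?_eq_some_iff_getElem.mp hf
      have hri : r[i]? = some r[i] := List.getElem?_eq_getElem hi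
      have hIns : rsInsert (r::rest) x = (r.set i x) :: rsInsert rest r[i] := by
        simp only [rsInsert, insertRow, hf, hri]
      have hBR : rsBumpRow (r::rest) x = rsBumpRow rest r[i] + 1 := by
        simp only [rsBumpRow, insertRow, hf, hri]
      have hBC : rsBumpCol (r::rest) x = rsBumpCol rest r[i] := by
        rw [rsBumpCol, hBR, rsBumpCol, List.getD_cons_succ]
      obtain ⟨ih1, ih2, ih3⟩ := ih r[i] (fun s hs => h1 s (List.mem_cons_of_mem _ hs))
        (h2.tail) (colStrict_tail h3)
      refine ⟨by rw [hBR]; simpa using Nat.succ_le_succ ih1, ?_, ?_⟩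
      · rw [hIns, hBR, hBC, List.map_cons, ih2]
        by_cases hlt : rsBumpRow rest r[i] < rest.length
        · rw [if_pos hlt, if_pos (by simpa using Nat.succ_lt_succ hlt)]
          rw [List.map_cons, List.set_cons_succ, List.length_set]
        · rw [if_neg hlt, if_neg (by simp only [List.length_cons]; omega)]
          rw [List.map_cons, List.length_set, List.cons_append]
      · intro m hm
        rw [hBC]
        rw [hBR] at hm
        cases m with
        | succ m =>
          rw [List.getD_cons_succ]
          exact ih3 m (by omega)
        | zero =>
          rw [List.getD_cons_zero]
          rcases Nat.eq_zero_or_pos (rsBumpRow rest r[i]) with hz | hppos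
          · cases rest with
            | nil =>
              have hc0 : rsBumpCol ([] : List (List ℕ)) r[i] = 0 := by
                simp [rsBumpCol, rsBumpRow]
              rw [hc0]
              omega
            | cons r1 rest' =>
              cases hf1 : r1.findIdx? (fun y => decide (r[i] < y)) with
              | some i1 =>
                exfalso
                obtain ⟨hi1, _, _⟩ := List.findIdx?_eq_some_iff_getElem.mp hf1
                have : rsBumpRow (r1::rest') r[i] = rsBumpRow rest' r1[i1] + 1 := by
                  simp only [rsBumpRow, insertRow, hf1, List.getElem?_eq_getElem hi1]
                omega
              | none =>
                have hnb : ∀ z ∈ r1, ¬ (r[i] < z) := by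
                  intro z hz
                  have := List.findIdx?_eq_none_iff.mp hf1 z hz
                  simpa using this
                have hr1i : r1.length ≤ i := by
                  by_contra hcon
                  push_neg at hcon
                  have hcs := h3 0 i (by simp) (by simpa using hcon)
                  have e0 : ((r::r1::rest').getD 0 []) = r := rfl
                  have e1 : ((r::r1::rest').getD 1 []) = r1 := rfl
                  rw [e0, e1, List.getD_eq_getElem _ _ hi, List.getD_eq_getElem _ _ hcon] at hcs
                  exact hnb r1[i] (List.getElem_mem hcon) hcs
                have hbc1 : rsBumpCol (r1::rest') r[i] = r1.length := by
                  rw [rsBumpCol, hz]; rfl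
                rw [hbc1]; omega
          · cases rest with
            | nil => simp [rsBumpRow] at hppos
            | cons r1 rest' =>
              have hch := (List.isChain_cons_cons.mp h2).1
              have hle0 := ih3 0 (by omega)
              rw [List.getD_cons_zero] at hle0
              omega

lemma rsInsert_facts (x : ℕ) (T : List (List ℕ))
    (h1 : ∀ r ∈ T, r ≠ [])
    (h2 : T.Chain' (fun r₁ r₂ : List ℕ => r₂.length ≤ r₁.length))
    (h3 : colStrict T) :
    (∀ r ∈ rsInsert T x, r ≠ []) ∧
    (rsInsert T x).Chain' (fun r₁ r₂ : List ℕ => r₂.length ≤ r₁.length) ∧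
    ∃ hfi : (rsInsert T x).findIdx (fun r => decide (r.length ≤ rsBumpCol T x + 1))
        < (rsInsert T x).length,
      rsBumpCol T x + 1 ≤
        ((rsInsert T x)[(rsInsert T x).findIdx
          (fun r => decide (r.length ≤ rsBumpCol T x + 1))]'hfi).length := by
  obtain ⟨hle, hshape, hbd⟩ := rsInsert_spec x T h1 h2 h3
  set S := rsInsert T x with hS
  set i := rsBumpRow T x with hidef
  set j := rsBumpCol T x with hj
  have hSlen : S.length = if i < T.length then T.length else T.length + 1 := by
    have h := congrArg List.length hshape
    rw [List.length_map] at h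
    by_cases hcase : i < T.length
    · rw [if_pos hcase] at h ⊢
      rw [List.length_set, List.length_map] at h
      exact h
    · rw [if_neg hcase] at h ⊢
      rw [List.length_append, List.length_map] at h
      simpa using h
  have hvali : i < S.length := by
    rw [hSlen]
    by_cases hcase : i < T.length
    · rw [if_pos hcase]; exact hcase
    · rw [if_neg hcase]; omega
  have hval : ∀ m (hm : m < S.length),
      (S[m]'hm).length = if m = i then j + 1 else (T.getD m []).length := by
    intro m hm
    have hmap : (S[m]'hm).length
        = (S.map List.length)[m]'(by rw [List.length_map]; exact hm) := by
      rw [List.getElem_map]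
    rw [hmap]
    by_cases hcase : i < T.length
    · have hmT : m < T.length := by
        rw [hSlen, if_pos hcase] at hm; exact hm
      simp only [hshape, if_pos hcase]
      by_cases hmi : m = i
      · subst hmi
        rw [List.getElem_set_self, if_pos rfl]
      · rw [List.getElem_set_ne (by omega), List.getElem_map, if_neg hmi,
          List.getD_eq_getElem _ _ hmT]
    · have hieq : i = T.length := by omega
      have hj0 : j = 0 := by
        rw [hj]
        simp only [rsBumpCol, ← hidef, hieq]
        rw [List.getD_eq_default _ _ (le_refl _)]
        rfl
      simp only [hshape, if_neg hcase]
      by_cases hmi : m = i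
      · subst hmi
        rw [List.getElem_append_right (by rw [List.length_map]; omega)]
        simp [hj0, hieq]
      · have hmT : m < T.length := by
          rw [hSlen, if_neg hcase] at hm
          omega
        rw [List.getElem_append_left (by rw [List.length_map]; exact hmT), List.getElem_map,
          if_neg hmi, List.getD_eq_getElem _ _ hmT]
  have hpos : ∀ m (hm : m < S.length), 0 < (S[m]'hm).length := by
    intro m hm
    rw [hval m hm]
    by_cases hmi : m = i
    · rw [if_pos hmi]; omega
    · rw [if_neg hmi]
      have hmT : m < T.length := by
        rw [hSlen] at hm
        by_cases hcase : i < T.length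
        · rw [if_pos hcase] at hm; exact hm
        · rw [if_neg hcase] at hm; omega
      rw [List.getD_eq_getElem _ _ hmT]
      exact List.length_pos_iff.mpr (h1 _ (List.getElem_mem hmT))
  refine ⟨?_, ?_, ?_⟩
  · intro r hr
    obtain ⟨m, hm, rfl⟩ := List.mem_iff_getElem.mp hr
    intro hnil
    have hp := hpos m hm
    rw [hnil] at hp
    simp at hp
  · apply List.isChain_iff_getElem.mpr
    intro m hm
    have hm1 : m + 1 < S.length := by omega
    have hm0 : m < S.length := by omega
    rw [hval m hm0, hval (m+1) hm1]
    have htch : ∀ p, p + 1 < T.length → (T.getD (p+1) []).length ≤ (T.getD p []).length := by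
      have hcg := List.isChain_iff_getElem.mp h2
      intro p hp1
      have h' := hcg p (by omega)
      rw [List.getD_eq_getElem _ _ (show p < T.length by omega), List.getD_eq_getElem _ _ hp1]
      exact h'
    have hji : (T.getD i []).length = j := by
      rw [hj]
      simp only [rsBumpCol, ← hidef]
    by_cases hmi1 : m + 1 = i
    · rw [if_pos hmi1, if_neg (by omega)]
      exact hbd m (by omega)
    · by_cases hmi : m = i
      · rw [if_neg hmi1, if_pos hmi]
        by_cases hm1T : m + 1 < T.length
        · have hch' := htch m hm1T
          rw [hmi] at hch' ⊢
          rw [hji] at hch'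
          omega
        · rw [List.getD_eq_default _ _ (by omega)]
          simp
      · rw [if_neg hmi1, if_neg hmi]
        apply htch
        rw [hSlen] at hm
        by_cases hcase : i < T.length
        · rw [if_pos hcase] at hm; omega
        · rw [if_neg hcase] at hm; omega
  · have hfile : S.findIdx (fun r => decide (r.length ≤ j + 1)) ≤ i := by
      by_contra hcon
      push_neg at hcon
      have hfalse := List.not_of_lt_findIdx hcon
      simp only [decide_eq_false_iff_not] at hfalse
      have hvi := hval i hvali
      rw [if_pos rfl] at hvi
      exact hfalse (le_of_eq hvi)
    refine ⟨by omega, ?_⟩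
    rcases Nat.lt_or_ge (S.findIdx (fun r => decide (r.length ≤ j + 1))) i with hficase | hficase
    · rw [hval _ (by omega), if_neg (by omega)]
      exact hbd _ hficase
    · have hfii : S.findIdx (fun r => decide (r.length ≤ j + 1)) = i := by omega
      rw [hval _ (by omega)]
      rw [if_pos hfii]


/-- transpose intertwines the two variants of column Beissinger
insertion: `(T ←cBS (a,b))^⊤ = T^⊤ ⇐cBS (a,b)`. -/
theorem transpose_cBS (T : List (List ℕ)) (a b : ℕ)
    (hT : PartiallyStandard T) (hab : a ≤ b) :
    transposeT (cBS T a b) = cBSalt (transposeT T) a b := by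
  obtain ⟨hne, hch, -, hcs, -, -⟩ := hT
  by_cases hab' : a = b
  · simp only [cBS, cBSalt, if_pos hab']
    exact transposeT_addAtCol T 0 a hne (pairwise_len hch)
      (fun _ => Nat.zero_le _) (fun _ => rfl)
  · simp only [cBS, cBSalt, if_neg hab', colInsertT, colBumpRow,
      transposeT_transposeT hne (pairwise_len hch)]
    obtain ⟨hS1, hS2, hfi, hlen⟩ := rsInsert_facts a T hne hch hcs
    exact transposeT_addAtCol _ _ _ hS1 (pairwise_len hS2)
      (fun _ => hlen) (fun heq => absurd heq (Nat.ne_of_lt hfi))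

end GelfandRSK
end
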